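/- arXiv:math/0410425 — 4 statements merged into one kernel-verified Lean document; each statement's English description precedes it below -/
import Mathlib

section
/- Let 𝒜 be a multiset of subsets of a finite set S, let X, Y ∈ 𝒜 with X ⊆ Y, and let z ∈ X. If 𝒜' is obtained from 𝒜 by replacing one or more occurrences of Y by Y \ {z}, then the transversal matroids M[𝒜] and M[𝒜'] are equal. -/
open Set Matroid

variable {α ι : Type*}

/-- `M` is the transversal matroid on ground set `S` presented by the set system `A`:
the independent sets of `M` are exactly the partial transversals of `A`. -/
def IsTransversalPres (M : Matroid α) (S : Set α) (A : ι → Set α) : Prop :=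
  M.E = S ∧ ∀ I : Set α, M.Indep I ↔ I ⊆ S ∧
    ∃ φ : I → ι, Function.Injective φ ∧ ∀ x : I, (x : α) ∈ A (φ x)

/-- `σ` is a cyclic permutation of the set `E`. -/
def IsCyclicOn (σ : Equiv.Perm α) (E : Set α) : Prop :=
  (∀ x ∉ E, σ x = x) ∧ ∀ x ∈ E, ∀ y ∈ E, ∃ n : ℕ, (σ ^ n) x = y

/-- `I` is the σ-interval with first element `f` and last element `l`. -/
def IsCycInterval (σ : Equiv.Perm α) (f l : α) (I : Set α) : Prop :=
  ∃ k : ℕ, (σ ^ k) f = l ∧ I = {x | ∃ j ≤ k, (σ ^ j) f = x}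

/-- The family of sets `A` is an antichain: no member contains another. -/
def IsSetAntichain (A : ι → Set α) : Prop := ∀ i j, i ≠ j → ¬ A i ⊆ A j

/-- `A` (with first elements `f` and last elements `l`) is a presentation of `M` by an
antichain of σ-intervals in the cyclic permutation `σ` of the ground set. -/
def IsMultiPathPres (M : Matroid α) (σ : Equiv.Perm α) {r : ℕ}
    (f l : Fin r → α) (A : Fin r → Set α) : Prop :=
  IsCyclicOn σ M.E ∧ (∀ i, f i ∈ M.E) ∧ (∀ i, IsCycInterval σ (f i) (l i) (A i)) ∧
  IsSetAntichain A ∧ IsTransversalPres M M.E A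

/-- A multi-path matroid: a transversal matroid with a presentation by an antichain of
σ-intervals in some cyclic permutation of the ground set. -/
def IsMultiPath (M : Matroid α) : Prop :=
  ∃ (σ : Equiv.Perm α) (r : ℕ) (f : Fin r → α) (l : Fin r → α) (A : Fin r → Set α),
    IsMultiPathPres M σ f l A

/-- A lattice path matroid: a transversal matroid with a presentation by an antichain of
(nonempty) intervals in some linear order (encoded by an injection `g` into `ℕ`) on the
ground set. -/
def IsLatticePathM (M : Matroid α) : Prop :=
  ∃ g : α → ℕ, Set.InjOn g M.E ∧
    ∃ (r : ℕ) (A : Fin r → Set α) (a b : Fin r → ℕ),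
      (∀ i, A i = {x ∈ M.E | a i ≤ g x ∧ g x ≤ b i}) ∧ (∀ i, (A i).Nonempty) ∧
      IsSetAntichain A ∧ IsTransversalPres M M.E A

/-- Deletion `M \ X`. -/
def mDelete (M : Matroid α) (X : Set α) : Matroid α := M ↾ (M.E \ X)

/-- Contraction `M / X`. -/
def mContract (M : Matroid α) (X : Set α) : Matroid α := (mDelete M✶ X)✶

/-- `N` is a minor of `M`. -/
def IsMinorOf (N M : Matroid α) : Prop :=
  ∃ C D : Set α, C ⊆ M.E ∧ D ⊆ M.E ∧ Disjoint C D ∧ N = mDelete (mContract M C) D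

/-- `C` is a circuit of `M`: a minimal dependent set. -/
def IsCircuitOf (M : Matroid α) (C : Set α) : Prop :=
  M.Dep C ∧ ∀ D ⊂ C, ¬ M.Dep D

/-- `C` is a cocircuit of `M`: a circuit of the dual. -/
def IsCocircuitOf (M : Matroid α) (C : Set α) : Prop := IsCircuitOf M✶ C

/-- `M` is connected: it has no loops and every pair of distinct elements of the
ground set lies in a common circuit. -/
def IsConnectedM (M : Matroid α) : Prop :=
  (∀ e ∈ M.E, M.Indep {e}) ∧
  ∀ x ∈ M.E, ∀ y ∈ M.E, x ≠ y → ∃ C, IsCircuitOf M C ∧ x ∈ C ∧ y ∈ C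

/-- The height of the lattice path with set of North steps `w` after its first `t` steps. -/
noncomputable def pathHt {n : ℕ} (w : Set (Fin n)) (t : ℕ) : ℕ := (w ∩ {j | (j : ℕ) < t}).ncard

/-- `w` is (the set of North steps of) a lattice path from `(0,0)` to `(m,r)` going
neither below `P` nor above `Q`. -/
def IsPathBetween (m r : ℕ) (P Q w : Set (Fin (m + r))) : Prop :=
  pathHt w (m + r) = r ∧ ∀ t ≤ m + r, pathHt P t ≤ pathHt w t ∧ pathHt w t ≤ pathHt Q t

/-- The data `(k, m, r, P, Q)` is a diagram: `P` and `Q` are lattice paths with `m` East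
and `r` North steps (starting at `p_1 = (k-1,0)` and `p_k = (0,k-1)` respectively) and,
comparing heights along antidiagonals, `Q` never goes below `P`. -/
def IsDiagram (k m r : ℕ) (P Q : Set (Fin (m + r))) : Prop :=
  1 ≤ k ∧ pathHt P (m + r) = r ∧ pathHt Q (m + r) = r ∧
    ∀ t ≤ m + r, pathHt P t ≤ k - 1 + pathHt Q t

/-- `w` is a b-path of the diagram `(k, m, r, P, Q)` from the starting point
`p_i = (k-i, i-1)` to the ending point `p'_i`: it stays weakly above `P` and weakly
below `Q` (heights compared along antidiagonals). -/
def IsBPath (k m r : ℕ) (P Q : Set (Fin (m + r))) (i : ℕ) (w : Set (Fin (m + r))) : Prop :=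
  1 ≤ i ∧ i ≤ k ∧ pathHt w (m + r) = r ∧
  ∀ t ≤ m + r, pathHt P t ≤ i - 1 + pathHt w t ∧ i - 1 + pathHt w t ≤ k - 1 + pathHt Q t

/-- A matroid isomorphism between matroids on possibly different types. -/
def MatroidIso {β : Type*} (M : Matroid α) (N : Matroid β) : Prop :=
  ∃ e : α → β, Set.BijOn e M.E N.E ∧ ∀ B ⊆ M.E, (M.IsBase B ↔ N.IsBase (e '' B))

/-- `b` is the first element of `X` encountered strictly after `a` in the cyclic order `σ`
(i.e. `b` is the image of `a` under the cyclic permutation induced by `σ` on `X`). -/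
def CycNextIn (σ : Equiv.Perm α) (X : Set α) (a b : α) : Prop :=
  ∃ n : ℕ, 1 ≤ n ∧ (σ ^ n) a = b ∧ ∀ j, 1 ≤ j → j < n → (σ ^ j) a ∉ X

/-- If `X ⊆ Y` are members of a set system `A` on a finite set `S` and `z ∈ X`, then
replacing one or more occurrences of `Y` by `Y \ {z}` (leaving the occurrence `X` intact)
does not change the transversal matroid. -/
theorem stmt_0 {α ι : Type*} [Fintype α] (S : Set α) (A A' : ι → Set α)
    (jX jY : ι) (hne : jX ≠ jY) (z : α) (hzX : z ∈ A jX) (hXY : A jX ⊆ A jY)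
    (hrepl : ∀ j, A' j = A j ∨ (A j = A jY ∧ A' j = A jY \ {z}))
    (hX' : A' jX = A jX)
    (hone : ∃ j, A j = A jY ∧ A' j = A jY \ {z})
    (M M' : Matroid α) (hM : IsTransversalPres M S A) (hM' : IsTransversalPres M' S A') :
    M = M' := by
  classical
  obtain ⟨hE, hI⟩ := hM
  obtain ⟨hE', hI'⟩ := hM'
  have hsub : ∀ j, A' j ⊆ A j := by
    intro j
    rcases hrepl j with h | ⟨h1, h2⟩
    · exact h ▸ subset_rfl
    · rw [h2, h1]; exact diff_subset
  have hsub2 : ∀ j, A j \ {z} ⊆ A' j := by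
    intro j
    rcases hrepl j with h | ⟨h1, h2⟩
    · rw [h]; exact diff_subset
    · rw [h2, h1]
  refine Matroid.ext_indep (hE.trans hE'.symm) ?_
  intro I hIE
  rw [hI, hI']
  constructor
  · rintro ⟨hIS, φ, hinj, hmem⟩
    refine ⟨hIS, ?_⟩
    by_cases hzI : z ∈ I
    · by_cases hz' : z ∈ A' (φ ⟨z, hzI⟩)
      · refine ⟨φ, hinj, fun x => ?_⟩
        by_cases hx : (x : α) = z
        · have hxe : x = ⟨z, hzI⟩ := Subtype.ext hx
          rw [hxe]; exact hz'
        · exact hsub2 _ ⟨hmem x, hx⟩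
      · set k := φ ⟨z, hzI⟩ with hk
        have hkY : A k = A jY := by
          rcases hrepl k with h | ⟨h1, _⟩
          · exact absurd (h ▸ hmem ⟨z, hzI⟩) hz'
          · exact h1
        have hkA' : A' k = A k \ {z} := by
          rcases hrepl k with h | ⟨h1, h2⟩
          · exact absurd (h ▸ hmem ⟨z, hzI⟩) hz'
          · rw [h2, h1]
        have hkX : k ≠ jX := fun h => hz' (by rw [h, hX']; exact hzX)
        refine ⟨fun x => Equiv.swap jX k (φ x),
          (Equiv.swap jX k).injective.comp hinj, fun x => ?_⟩
        by_cases h1 : φ x = k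
        · have hxe : x = ⟨z, hzI⟩ := hinj (h1.trans hk)
          simp only [h1, Equiv.swap_apply_right, hX']
          rw [hxe]; exact hzX
        · by_cases h2 : φ x = jX
          · have hxne : (x : α) ≠ z := fun hc => h1 (by have hxe : x = ⟨z, hzI⟩ := Subtype.ext hc; first | (rw [hxe]; exact hk.symm) | rw [hxe])
            simp only [h2, Equiv.swap_apply_left, hkA']
            exact ⟨hkY ▸ hXY (h2 ▸ hmem x), hxne⟩
          · simp only [Equiv.swap_apply_of_ne_of_ne h2 h1]
            have hxne : (x : α) ≠ z := fun hc => h1 (by have hxe : x = ⟨z, hzI⟩ := Subtype.ext hc; first | (rw [hxe]; exact hk.symm) | rw [hxe])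
            exact hsub2 _ ⟨hmem x, hxne⟩
    · refine ⟨φ, hinj, fun x => ?_⟩
      have hxne : (x : α) ≠ z := fun hc => hzI (hc ▸ x.2)
      exact hsub2 _ ⟨hmem x, hxne⟩
  · rintro ⟨hIS, φ, hinj, hmem⟩
    exact ⟨hIS, φ, hinj, fun x => hsub _ (hmem x)⟩
end

section
/- The class of multi-path matroids is closed under deletion: if M is a multi-path matroid on S and x ∈ S, then M \ x is a multi-path matroid. -/
open Set Matroid

variable {α ι : Type*}

section MPHelpers

set_option linter.unusedSectionVars false
set_option linter.unusedVariables false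


variable {α : Type*}

/-- The τ-interval starting at `a` of length `m` (as exponent bound). -/
def mpItv (τ : Equiv.Perm α) (a : α) (m : ℕ) : Set α := {y | ∃ t ≤ m, (τ ^ t) a = y}

/-- `I` is a partial transversal of the family `B`. -/
def mpPart {r : ℕ} (B : Fin r → Set α) (I : Set α) : Prop :=
  ∃ φ : I → Fin r, Function.Injective φ ∧ ∀ v : I, (v : α) ∈ B (φ v)

lemma mpow_succ_outer (τ : Equiv.Perm α) (n : ℕ) (x : α) :
    (τ ^ (n + 1)) x = τ ((τ ^ n) x) := by rw [pow_succ', Equiv.Perm.mul_apply]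

lemma mpow_succ_inner (τ : Equiv.Perm α) (n : ℕ) (x : α) :
    (τ ^ (n + 1)) x = (τ ^ n) (τ x) := by rw [pow_succ, Equiv.Perm.mul_apply]

lemma mpItv_self (τ : Equiv.Perm α) (a : α) (m : ℕ) : a ∈ mpItv τ a m :=
  ⟨0, Nat.zero_le _, by simp⟩

lemma mpItv_last (τ : Equiv.Perm α) (a : α) (m : ℕ) : (τ ^ m) a ∈ mpItv τ a m :=
  ⟨m, le_rfl, rfl⟩

lemma mpItv_nonempty (τ : Equiv.Perm α) (a : α) (m : ℕ) : (mpItv τ a m).Nonempty :=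
  ⟨a, mpItv_self τ a m⟩

lemma pow_apply_mem_mpItv {τ : Equiv.Perm α} {a : α} {m t : ℕ} (h : t ≤ m) :
    (τ ^ t) a ∈ mpItv τ a m := ⟨t, h, rfl⟩

-- cancel: from (τ^(m+1)) a = (τ^t) a with t ≤ m, derive τ⁻¹ a = (τ^(m-t)) a
lemma mpow_cancel {τ : Equiv.Perm α} {a : α} {m t : ℕ} (ht : t ≤ m)
    (h : (τ ^ (m+1)) a = (τ ^ t) a) : τ⁻¹ a = (τ ^ (m - t)) a := by
  have h1 : (τ ^ t) ((τ ^ (m + 1 - t)) a) = (τ ^ t) a := by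
    rw [← Equiv.Perm.mul_apply, ← pow_add]
    rw [show t + (m + 1 - t) = m + 1 by omega]
    exact h
  have h2 : (τ ^ (m + 1 - t)) a = a := (τ ^ t).injective h1
  have h4 : τ ((τ ^ (m - t)) a) = a := by
    rw [← mpow_succ_outer, show m - t + 1 = m + 1 - t by omega]
    exact h2
  calc τ⁻¹ a = τ⁻¹ (τ ((τ ^ (m - t)) a)) := by rw [h4]
    _ = (τ ^ (m - t)) a := by simp

lemma mpItv_diff_last {τ : Equiv.Perm α} {a e : α} {m : ℕ}
    (he : e ∈ mpItv τ a m) (hne : τ e ∉ mpItv τ a m) :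
    e = (τ ^ m) a ∧ ∀ m', m = m' + 1 → mpItv τ a m \ {e} = mpItv τ a m' := by
  have key : ∀ t ≤ m, (τ ^ t) a = e → t = m := by
    intro t ht hte
    by_contra hlt
    have ht' : t + 1 ≤ m := by omega
    apply hne
    refine ⟨t + 1, ht', ?_⟩
    rw [mpow_succ_outer, hte]
  obtain ⟨s, hs, hse⟩ := he
  have hsm := key s hs hse
  constructor
  · rw [← hse, hsm]
  · intro m' hm'
    ext y
    simp only [mpItv, mem_diff, mem_singleton_iff, mem_setOf_eq]
    constructor
    · rintro ⟨⟨t, ht, hty⟩, hye⟩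
      refine ⟨t, ?_, hty⟩
      rcases Nat.lt_or_ge t (m' + 1) with h | h
      · omega
      · exfalso
        apply hye
        have htm : t = m := by omega
        rw [← hty, htm, ← hsm]
        exact hse
    · rintro ⟨t, ht, hty⟩
      refine ⟨⟨t, by omega, hty⟩, ?_⟩
      intro hye
      have : t = m := key t (by omega) (by rw [hty, hye])
      omega


lemma mpItv_diff_first {τ : Equiv.Perm α} {a e : α} {m : ℕ}
    (he : e ∈ mpItv τ a m) (hne : τ⁻¹ e ∉ mpItv τ a m) :
    e = a ∧ ∀ m', m = m' + 1 → mpItv τ a m \ {e} = mpItv τ (τ a) m' := by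
  have key : ∀ t ≤ m, (τ ^ t) a = e → t = 0 := by
    intro t ht hte
    by_contra h0
    apply hne
    refine ⟨t - 1, by omega, ?_⟩
    rw [← hte, show t = (t-1)+1 by omega, mpow_succ_outer]
    simp
  obtain ⟨s, hs, hse⟩ := he
  have hs0 := key s hs hse
  subst hs0
  simp only [pow_zero, Equiv.Perm.coe_one, id_eq] at hse
  constructor
  · exact hse.symm
  · intro m' hm'
    ext y
    simp only [mpItv, mem_diff, mem_singleton_iff, mem_setOf_eq]
    constructor
    · rintro ⟨⟨t, ht, hty⟩, hye⟩
      have ht0 : t ≠ 0 := by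
        intro h0; subst h0; apply hye; rw [← hty]; simp [hse]
      refine ⟨t - 1, by omega, ?_⟩
      rw [← mpow_succ_inner, show t - 1 + 1 = t by omega, hty]
    · rintro ⟨t, ht, hty⟩
      have hmem : (τ ^ (t+1)) a = y := by rw [mpow_succ_inner, hty]
      refine ⟨⟨t + 1, by omega, hmem⟩, ?_⟩
      intro hye
      have := key (t+1) (by omega) (by rw [hmem, hye])
      omega

-- If the successor of the last element is outside, the predecessor of the start is outside.
lemma mpItv_first_escape {τ : Equiv.Perm α} {a : α} {m : ℕ}
    (h : τ ((τ ^ m) a) ∉ mpItv τ a m) : τ⁻¹ a ∉ mpItv τ a m := by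
  rintro ⟨t, ht, hta⟩
  apply h
  have h1 : (τ ^ (m + 1)) a = (τ ^ (m - t)) a := by
    have : (τ ^ (t + 1)) a = a := by
      rw [mpow_succ_outer, hta]; simp
    calc (τ ^ (m + 1)) a = (τ ^ (m - t)) ((τ ^ (t + 1)) a) := by
          rw [← Equiv.Perm.mul_apply, ← pow_add]; congr 2; omega
      _ = (τ ^ (m - t)) a := by rw [this]
  rw [← mpow_succ_outer, h1]
  exact pow_apply_mem_mpItv (by omega)

lemma mpItv_last_escape {τ : Equiv.Perm α} {a : α} {m : ℕ}
    (h : τ⁻¹ a ∉ mpItv τ a m) : τ ((τ ^ m) a) ∉ mpItv τ a m := by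
  rintro ⟨t, ht, hta⟩
  apply h
  rw [← mpow_succ_outer] at hta
  rw [mpow_cancel ht hta.symm]
  exact pow_apply_mem_mpItv (by omega)

lemma mpPart_mono {r : ℕ} {B B' : Fin r → Set α} (h : ∀ k, B' k ⊆ B k) {I : Set α}
    (hI : mpPart B' I) : mpPart B I := by
  obtain ⟨φ, hinj, hmem⟩ := hI
  exact ⟨φ, hinj, fun v => h _ (hmem v)⟩

/-- Key exchange lemma: if `B i ⊆ B j` and `e ∈ B i`, then removing `e` from `B j`
presents the same transversal system. -/
lemma mpPart_update_iff {r : ℕ} [DecidableEq (Fin r)] {B : Fin r → Set α} {i j : Fin r}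
    (hij : i ≠ j) {e : α} (hei : e ∈ B i) (hsub : B i ⊆ B j) (I : Set α) :
    mpPart (Function.update B j (B j \ {e})) I ↔ mpPart B I := by
  constructor
  · refine mpPart_mono (fun k => ?_)
    by_cases hk : k = j
    · subst hk; rw [Function.update_self]; exact diff_subset
    · rw [Function.update_of_ne hk]
  · rintro ⟨φ, hinj, hmem⟩
    by_cases hc : ∃ v : I, φ v = j ∧ (v : α) = e
    · obtain ⟨v₀, hv₀j, hv₀e⟩ := hc
      refine ⟨fun v => (Equiv.swap i j) (φ v), (Equiv.swap i j).injective.comp hinj, ?_⟩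
      intro v
      show (v : α) ∈ Function.update B j (B j \ {e}) ((Equiv.swap i j) (φ v))
      by_cases hvj : φ v = j
      · have hv : v = v₀ := hinj (hvj.trans hv₀j.symm)
        rw [hvj, Equiv.swap_apply_right, Function.update_of_ne hij, hv, hv₀e]
        exact hei
      · by_cases hvi : φ v = i
        · rw [hvi, Equiv.swap_apply_left, Function.update_self]
          refine ⟨hsub (hvi ▸ hmem v), ?_⟩
          simp only [mem_singleton_iff]
          intro hve
          have : v = v₀ := Subtype.ext (hve.trans hv₀e.symm)
          rw [this, hv₀j] at hvi
          exact hij hvi.symm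
        · rw [Equiv.swap_apply_of_ne_of_ne hvi hvj, Function.update_of_ne hvj]
          exact hmem v
    · push_neg at hc
      refine ⟨φ, hinj, fun v => ?_⟩
      by_cases hvj : φ v = j
      · rw [hvj, Function.update_self]
        exact ⟨hvj ▸ hmem v, by simpa using hc v hvj⟩
      · rw [Function.update_of_ne hvj]; exact hmem v

/-- Reindexing: restrict a family to its nonempty members. -/
lemma mpPart_reindex {r : ℕ} (C : Fin r → Set α) (P : Set α → Prop)
    (hP : ∀ k, (C k).Nonempty → P (C k))
    (hnopair : ∀ p q, p ≠ q → (C p).Nonempty → ¬ C p ⊆ C q) :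
    ∃ (r' : ℕ) (D : Fin r' → Set α),
      (∀ i, P (D i)) ∧ (∀ i, (D i).Nonempty) ∧ IsSetAntichain D ∧
      (∀ I : Set α, mpPart D I ↔ mpPart C I) := by
  classical
  let s : Finset (Fin r) := Finset.univ.filter fun k => (C k).Nonempty
  let ord := s.orderIsoOfFin rfl
  refine ⟨s.card, fun i => C (ord i), ?_, ?_, ?_, ?_⟩
  · intro i
    have h2 : (ord i : Fin r) ∈ s := (ord i).2
    rw [Finset.mem_filter] at h2
    exact hP _ h2.2
  · intro i
    have h2 : (ord i : Fin r) ∈ s := (ord i).2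
    rw [Finset.mem_filter] at h2
    exact h2.2
  · intro p q hpq
    have hne : (ord p : Fin r) ≠ (ord q : Fin r) := by
      intro h
      exact hpq (ord.injective (Subtype.ext h))
    refine hnopair _ _ hne ?_
    have h2 : (ord p : Fin r) ∈ s := (ord p).2
    rw [Finset.mem_filter] at h2
    exact h2.2
  · intro I
    constructor
    · rintro ⟨φ, hinj, hmem⟩
      refine ⟨fun v => (ord (φ v) : Fin r), ?_, hmem⟩
      intro v w h
      exact hinj (ord.injective (Subtype.ext h))
    · rintro ⟨φ, hinj, hmem⟩
      have hmem' : ∀ v : I, φ v ∈ s := by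
        intro v
        simp only [s, Finset.mem_filter, Finset.mem_univ, true_and]
        exact ⟨_, hmem v⟩
      refine ⟨fun v => ord.symm ⟨φ v, hmem' v⟩, ?_, ?_⟩
      · intro v w h
        apply hinj
        have := congrArg ord h
        simp only [OrderIso.apply_symm_apply] at this
        exact congrArg Subtype.val this
      · intro v
        show (v : α) ∈ C ((ord (ord.symm ⟨φ v, hmem' v⟩)) : Fin r)
        rw [OrderIso.apply_symm_apply]
        exact hmem v

lemma mpItv_zero (τ : Equiv.Perm α) (a : α) : mpItv τ a 0 = {a} := by
  ext y
  simp only [mpItv, mem_setOf_eq, mem_singleton_iff, Nat.le_zero]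
  constructor
  · rintro ⟨t, rfl, h⟩; simpa using h.symm
  · rintro rfl; exact ⟨0, rfl, by simp⟩

/-- The invariant: every nested pair has an endpoint witness. -/
def mpSinv {r : ℕ} (τ : Equiv.Perm α) (B : Fin r → Set α) : Prop :=
  ∀ p q, p ≠ q → (B p).Nonempty → B p ⊆ B q →
    ∃ e ∈ B p, τ e ∉ B q ∨ τ⁻¹ e ∉ B q

/-- Each member is empty or a τ-interval with head in `E'`. -/
def mpItvP (τ : Equiv.Perm α) (E' : Set α) {r : ℕ} (B : Fin r → Set α) : Prop :=
  ∀ k, B k = ∅ ∨ ∃ a m, a ∈ E' ∧ B k = mpItv τ a m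

lemma mpIter [Fintype α] (τ : Equiv.Perm α) (E' : Set α) (hτE : ∀ y ∈ E', τ y ∈ E')
    {r : ℕ} :
    ∀ (n : ℕ) (B : Fin r → Set α), (∑ k, (B k).ncard) ≤ n → mpItvP τ E' B → mpSinv τ B →
    ∃ C : Fin r → Set α, mpItvP τ E' C ∧ (∀ I : Set α, mpPart C I ↔ mpPart B I) ∧
      ∀ p q, p ≠ q → (C p).Nonempty → ¬ C p ⊆ C q := by
  classical
  intro n
  induction n with
  | zero =>
    intro B hμ ha hS
    refine ⟨B, ha, fun I => Iff.rfl, ?_⟩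
    intro p q hpq hne _
    obtain ⟨y, hy⟩ := hne
    have h0 : (B p).ncard = 0 := by
      have := Finset.sum_le_sum_of_subset (f := fun k => (B k).ncard) (Finset.subset_univ {p})
      simp only [Finset.sum_singleton] at this
      omega
    rw [Set.ncard_eq_zero (B p).toFinite] at h0
    rw [h0] at hy
    exact hy
  | succ n ih =>
    intro B hμ ha hS
    by_cases hpair : ∃ p q, p ≠ q ∧ (B p).Nonempty ∧ B p ⊆ B q
    swap
    · refine ⟨B, ha, fun I => Iff.rfl, ?_⟩
      push_neg at hpair
      intro p q hpq hne hsub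
      exact hpair p q hpq hne hsub
    -- choose a pair with maximal outer set
    obtain ⟨p₁, q₁, hpq₁, hne₁, hsub₁⟩ := hpair
    set PS : Finset (Fin r × Fin r) :=
      Finset.univ.filter fun pq => pq.1 ≠ pq.2 ∧ (B pq.1).Nonempty ∧ B pq.1 ⊆ B pq.2 with hPS
    have hPSne : PS.Nonempty := ⟨(p₁, q₁), by simp [hPS, hpq₁, hne₁, hsub₁]⟩
    obtain ⟨pq₀, hpq₀mem, hmax⟩ := PS.exists_max_image (fun pq => (B pq.2).ncard) hPSne
    simp only [hPS, Finset.mem_filter, Finset.mem_univ, true_and] at hpq₀mem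
    obtain ⟨hpq₀, hne₀, hsub₀⟩ := hpq₀mem
    set p₀ := pq₀.1
    set q₀ := pq₀.2
    have hq₀ne : (B q₀).Nonempty := hne₀.mono hsub₀
    -- maximality of the outer set
    have hqmax : ∀ m, q₀ ≠ m → B q₀ ⊆ B m → B m = B q₀ := by
      intro m hm hsubm
      have hmPS : (q₀, m) ∈ PS := by
        simp only [hPS, Finset.mem_filter, Finset.mem_univ, true_and]
        exact ⟨hm, hq₀ne, hsubm⟩
      have := hmax _ hmPS
      exact (Set.eq_of_subset_of_ncard_le hsubm this).symm
    -- the witness for the chosen pair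
    obtain ⟨e, he, hesc⟩ := hS p₀ q₀ hpq₀ hne₀ hsub₀
    have heq₀ : e ∈ B q₀ := hsub₀ he
    -- interval structure of B q₀
    obtain hq₀emp | ⟨a, m₀, haE, hq₀itv⟩ := ha q₀
    · rw [hq₀emp] at hq₀ne; exact absurd hq₀ne (by simp)
    set B' := Function.update B q₀ (B q₀ \ {e}) with hB'
    have hB'q₀ : B' q₀ = B q₀ \ {e} := Function.update_self _ _ _
    have hB'k : ∀ k, k ≠ q₀ → B' k = B k := fun k hk => Function.update_of_ne hk _ _
    -- measure decreases
    have hμ' : (∑ k, (B' k).ncard) ≤ n := by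
      have hlt : (B q₀ \ {e}).ncard < (B q₀).ncard :=
        Set.ncard_diff_singleton_lt_of_mem heq₀ (B q₀).toFinite
      have h1 : (∑ k, (B' k).ncard) =
          (B q₀ \ {e}).ncard + ∑ k ∈ Finset.univ.erase q₀, (B k).ncard := by
        rw [hB']
        rw [show (fun k => (Function.update B q₀ (B q₀ \ {e}) k).ncard)
            = Function.update (fun k => (B k).ncard) q₀ ((B q₀ \ {e}).ncard) from ?_]
        · rw [Finset.erase_eq]
          exact Finset.sum_update_of_mem (Finset.mem_univ q₀) _ _
        · ext k
          by_cases hk : k = q₀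
          · subst hk; simp
          · simp [Function.update_of_ne hk]
      have h2 : (∑ k, (B k).ncard) =
          (B q₀).ncard + ∑ k ∈ Finset.univ.erase q₀, (B k).ncard :=
        (Finset.add_sum_erase _ _ (Finset.mem_univ q₀)).symm
      omega
    -- interval property preserved
    have ha' : mpItvP τ E' B' := by
      intro k
      by_cases hk : k = q₀
      swap
      · rw [hB'k k hk]; exact ha k
      subst hk
      rw [hB'q₀, hq₀itv]
      rw [hq₀itv] at heq₀
      rcases hesc with hLast | hFirst
      · rw [hq₀itv] at hLast
        obtain ⟨helast, hrec⟩ := mpItv_diff_last heq₀ hLast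
        rcases Nat.eq_zero_or_pos m₀ with hm0 | hm0
        · subst hm0
          left
          rw [mpItv_zero] at heq₀ ⊢
          simp only [mem_singleton_iff] at heq₀
          rw [heq₀]
          simp
        · right
          exact ⟨a, m₀ - 1, haE, hrec (m₀ - 1) (by omega)⟩
      · rw [hq₀itv] at hFirst
        obtain ⟨hefirst, hrec⟩ := mpItv_diff_first heq₀ hFirst
        rcases Nat.eq_zero_or_pos m₀ with hm0 | hm0
        · subst hm0
          left
          rw [mpItv_zero] at heq₀ ⊢
          simp only [mem_singleton_iff] at heq₀
          rw [heq₀]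
          simp
        · right
          exact ⟨τ a, m₀ - 1, hτE a haE, hrec (m₀ - 1) (by omega)⟩
    -- invariant preserved
    have hS' : mpSinv τ B' := by
      intro p q hpq hpne hpsub
      by_cases hq : q = q₀
      · subst hq
        have hp : p ≠ q₀ := hpq
        rw [hB'k p hp] at hpne hpsub ⊢
        rw [hB'q₀] at hpsub ⊢
        have hpsubold : B p ⊆ B q₀ := hpsub.trans diff_subset
        obtain ⟨e', he', hesc'⟩ := hS p q₀ hpq hpne hpsubold
        refine ⟨e', he', ?_⟩
        rcases hesc' with h | h
        · exact Or.inl fun hc => h (diff_subset hc)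
        · exact Or.inr fun hc => h (diff_subset hc)
      · by_cases hp : p = q₀
        · subst hp
          rw [hB'q₀] at hpne hpsub ⊢
          rw [hB'k q hq] at hpsub ⊢
          rw [hq₀itv] at heq₀
          rcases hesc with hLast | hFirst
          · rw [hq₀itv] at hLast
            obtain ⟨helast, hrec⟩ := mpItv_diff_last heq₀ hLast
            rcases Nat.eq_zero_or_pos m₀ with hm0 | hm0
            · exfalso
              subst hm0
              rw [hq₀itv, mpItv_zero] at hpne
              rw [mpItv_zero] at heq₀
              simp only [mem_singleton_iff] at heq₀
              rw [heq₀] at hpne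
              simp at hpne
            have hdiff : B q₀ \ {e} = mpItv τ a (m₀ - 1) := hq₀itv ▸ hrec (m₀-1) (by omega)
            by_cases hBsub : B q₀ ⊆ B q
            · have hqeq : B q = B q₀ := hqmax q (Ne.symm hq) hBsub
              refine ⟨a, ?_, Or.inr ?_⟩
              · rw [hdiff]; exact mpItv_self τ a _
              · rw [hqeq, hq₀itv]
                apply mpItv_first_escape
                rw [← helast]
                exact hLast
            · have heq : e ∉ B q := by
                intro hc
                apply hBsub
                intro y hy
                by_cases hye : y = e
                · subst hye; exact hc
                · exact hpsub ⟨hy, hye⟩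
              refine ⟨(τ ^ (m₀ - 1)) a, ?_, Or.inl ?_⟩
              · rw [hdiff]; exact mpItv_last τ a _
              · rw [← mpow_succ_outer, show m₀ - 1 + 1 = m₀ by omega, ← helast]
                exact heq
          · rw [hq₀itv] at hFirst
            obtain ⟨hefirst, hrec⟩ := mpItv_diff_first heq₀ hFirst
            rcases Nat.eq_zero_or_pos m₀ with hm0 | hm0
            · exfalso
              subst hm0
              rw [hq₀itv, mpItv_zero] at hpne
              rw [mpItv_zero] at heq₀
              simp only [mem_singleton_iff] at heq₀
              rw [heq₀] at hpne
              simp at hpne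
            have hdiff : B q₀ \ {e} = mpItv τ (τ a) (m₀ - 1) := hq₀itv ▸ hrec (m₀-1) (by omega)
            by_cases hBsub : B q₀ ⊆ B q
            · have hqeq : B q = B q₀ := hqmax q (Ne.symm hq) hBsub
              refine ⟨(τ ^ m₀) a, ?_, Or.inl ?_⟩
              · rw [hdiff, show m₀ = (m₀ - 1) + 1 by omega, mpow_succ_inner]
                exact mpItv_last τ (τ a) _
              · rw [hqeq, hq₀itv]
                apply mpItv_last_escape
                have h2 := hFirst
                rw [hefirst] at h2
                exact h2
            · have heq : e ∉ B q := by
                intro hc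
                apply hBsub
                intro y hy
                by_cases hye : y = e
                · subst hye; exact hc
                · exact hpsub ⟨hy, hye⟩
              refine ⟨τ a, ?_, Or.inr ?_⟩
              · rw [hdiff]; exact mpItv_self τ (τ a) _
              · rw [show τ⁻¹ (τ a) = a by simp, ← hefirst]
                exact heq
        · rw [hB'k p hp] at hpne hpsub ⊢
          rw [hB'k q hq] at hpsub ⊢
          exact hS p q hpq hpne hpsub
    obtain ⟨C, hCitv, hCpart, hCnopair⟩ := ih B' hμ' ha' hS'
    refine ⟨C, hCitv, ?_, hCnopair⟩
    intro I
    rw [hCpart I, hB']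
    exact mpPart_update_iff hpq₀ he hsub₀ I

section CycSetup

variable [DecidableEq α] {σ : Equiv.Perm α} {E : Set α}

lemma mpCyc_mem (hcyc : IsCyclicOn σ E) {y : α} (hy : y ∈ E) : σ y ∈ E := by
  by_contra h
  have h1 : σ (σ y) = σ y := hcyc.1 _ h
  have h2 : σ y = y := σ.injective h1
  rw [h2] at h
  exact h hy

lemma mpCyc_pow_mem (hcyc : IsCyclicOn σ E) {y : α} (hy : y ∈ E) (t : ℕ) :
    (σ ^ t) y ∈ E := by
  induction t with
  | zero => simpa using hy
  | succ n ihn => rw [mpow_succ_outer]; exact mpCyc_mem hcyc ihn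

lemma mpCyc_sigx_ne (hcyc : IsCyclicOn σ E) {x : α} (hx : x ∈ E)
    (hne : (E \ {x}).Nonempty) : σ x ≠ x := by
  intro hfix
  obtain ⟨y, hyE, hyx⟩ := hne
  obtain ⟨n, hn⟩ := hcyc.2 x hx y hyE
  have : ∀ m : ℕ, (σ ^ m) x = x := by
    intro m
    induction m with
    | zero => simp
    | succ k ihk => rw [mpow_succ_outer, ihk, hfix]
  rw [this n] at hn
  exact hyx hn.symm

lemma mpTau_mem (hcyc : IsCyclicOn σ E) {x : α} (hx : x ∈ E)
    (hne : (E \ {x}).Nonempty) {y : α} (hy : y ∈ E \ {x}) :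
    (Equiv.swap x (σ x) * σ) y ∈ E \ {x} := by
  have hσx := mpCyc_sigx_ne hcyc hx hne
  obtain ⟨hyE, hyx⟩ := hy
  simp only [Equiv.Perm.mul_apply]
  by_cases h1 : σ y = x
  · rw [h1, Equiv.swap_apply_left]
    exact ⟨mpCyc_mem hcyc hx, hσx⟩
  · have h2 : σ y ≠ σ x := fun hc => hyx (σ.injective hc)
    rw [Equiv.swap_apply_of_ne_of_ne h1 h2]
    exact ⟨mpCyc_mem hcyc hyE, h1⟩

lemma mpTau_cyc (hcyc : IsCyclicOn σ E) {x : α} (hx : x ∈ E)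
    (hne : (E \ {x}).Nonempty) :
    IsCyclicOn (Equiv.swap x (σ x) * σ) (E \ {x}) := by
  have hσx := mpCyc_sigx_ne hcyc hx hne
  set τ := Equiv.swap x (σ x) * σ with hτ
  constructor
  · intro y hy
    by_cases hyx : y = x
    · subst hyx
      simp only [hτ, Equiv.Perm.mul_apply, Equiv.swap_apply_right]
    · have hyE : y ∉ E := fun hc => hy ⟨hc, hyx⟩
      have h1 : σ y = y := hcyc.1 _ hyE
      simp only [hτ, Equiv.Perm.mul_apply, h1]
      have h2 : y ≠ σ x := by
        intro hc
        exact hyE (hc ▸ mpCyc_mem hcyc hx)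
      exact Equiv.swap_apply_of_ne_of_ne hyx h2
  · intro a ha b hb
    have key : ∀ m : ℕ, ∀ b, b ∈ E \ {x} → (σ ^ m) a = b → ∃ n, (τ ^ n) a = b := by
      intro m
      induction m using Nat.strong_induction_on with
      | _ m ihm =>
        intro b hb hm
        rcases Nat.eq_zero_or_pos m with hm0 | hm0
        · subst hm0
          simp only [pow_zero, Equiv.Perm.coe_one, id_eq] at hm
          exact ⟨0, by simpa using hm⟩
        · have hmm : (σ ^ m) a = σ ((σ ^ (m-1)) a) := by
            rw [← mpow_succ_outer, show m - 1 + 1 = m by omega]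
          set d := (σ ^ (m-1)) a with hd
          have hdE : d ∈ E := mpCyc_pow_mem hcyc ha.1 _
          by_cases hdx : d = x
          · have hm2 : 2 ≤ m := by
              rcases Nat.lt_or_ge m 2 with h | h
              · exfalso
                have hm1 : m = 1 := by omega
                apply ha.2
                rw [Set.mem_singleton_iff]
                have hda : d = a := by rw [hd, hm1]; simp
                rw [← hda, hdx]
              · exact h
            have hdd : σ ((σ ^ (m-2)) a) = d := by
              rw [hd, ← mpow_succ_outer, show m - 2 + 1 = m - 1 by omega]
            set d' := (σ ^ (m-2)) a with hd'
            have hd'E : d' ∈ E := mpCyc_pow_mem hcyc ha.1 _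
            have hd'x : d' ≠ x := by
              intro hc
              apply hσx
              rw [← hc, hdd, hdx, hc]
            obtain ⟨n, hn⟩ := ihm (m-2) (by omega) d' ⟨hd'E, hd'x⟩ rfl
            refine ⟨n + 1, ?_⟩
            rw [mpow_succ_outer, hn]
            have : τ d' = σ x := by
              simp only [hτ, Equiv.Perm.mul_apply, hdd, hdx, Equiv.swap_apply_left]
            rw [this, ← hm, hmm, hdx]
          · obtain ⟨n, hn⟩ := ihm (m-1) (by omega) d ⟨hdE, hdx⟩ rfl
            refine ⟨n + 1, ?_⟩
            rw [mpow_succ_outer, hn]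
            have hσd : σ d = b := by rw [← hm, hmm]
            have hb1 : b ≠ x := hb.2
            have hb2 : b ≠ σ x := by
              intro hc
              apply hdx
              apply σ.injective
              rw [hσd, hc]
            simp only [hτ, Equiv.Perm.mul_apply, hσd]
            exact Equiv.swap_apply_of_ne_of_ne hb1 hb2
    obtain ⟨m, hm⟩ := hcyc.2 a ha.1 b hb.1
    exact key m b hb hm

end CycSetup

lemma mpItv_succ (τ : Equiv.Perm α) (a : α) (m : ℕ) :
    mpItv τ a (m+1) = mpItv τ a m ∪ {(τ ^ (m+1)) a} := by
  ext y
  simp only [mpItv, mem_setOf_eq, mem_union, mem_singleton_iff]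
  constructor
  · rintro ⟨t, ht, hty⟩
    rcases Nat.lt_or_ge t (m+1) with h | h
    · exact Or.inl ⟨t, Nat.lt_succ_iff.mp h, hty⟩
    · right
      have htm : t = m + 1 := by omega
      rw [← hty, htm]
  · rintro (⟨t, ht, hty⟩ | h)
    · exact ⟨t, Nat.le_succ_of_le ht, hty⟩
    · exact ⟨m+1, le_rfl, h.symm⟩

lemma mpSet_succ (σ : Equiv.Perm α) (f : α) (K : ℕ) :
    {y | ∃ t ≤ K + 1, (σ ^ t) f = y} =
      {y | ∃ t ≤ K, (σ ^ t) f = y} ∪ {(σ ^ (K+1)) f} := by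
  ext y
  simp only [mem_setOf_eq, mem_union, mem_singleton_iff]
  constructor
  · rintro ⟨t, ht, hty⟩
    rcases Nat.lt_or_ge t (K+1) with h | h
    · exact Or.inl ⟨t, Nat.lt_succ_iff.mp h, hty⟩
    · right
      have htm : t = K + 1 := by omega
      rw [← hty, htm]
  · rintro (⟨t, ht, hty⟩ | h)
    · exact ⟨t, Nat.le_succ_of_le ht, hty⟩
    · exact ⟨K+1, le_rfl, h.symm⟩

section DelItv

variable [DecidableEq α] {σ : Equiv.Perm α} {E : Set α}

lemma mpDel_interval (hcyc : IsCyclicOn σ E) {x : α} (hx : x ∈ E)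
    (hne : (E \ {x}).Nonempty) {f : α} (hf : f ∈ E) (K : ℕ) :
    {y | ∃ t ≤ K, (σ ^ t) f = y} \ {x} = ∅ ∨
    ∃ a m, a ∈ E \ {x} ∧
      {y | ∃ t ≤ K, (σ ^ t) f = y} \ {x} = mpItv (Equiv.swap x (σ x) * σ) a m := by
  have hσx := mpCyc_sigx_ne hcyc hx hne
  set τ := Equiv.swap x (σ x) * σ with hτ
  have claim : ∀ K : ℕ, (∀ t ≤ K, (σ ^ t) f = x) ∨
      ∃ a m, a ∈ E \ {x} ∧ {y | ∃ t ≤ K, (σ ^ t) f = y} \ {x} = mpItv τ a m ∧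
        ((τ ^ m) a = (σ ^ K) f ∨ ((σ ^ K) f = x ∧ σ ((τ ^ m) a) = x)) := by
    intro K
    induction K with
    | zero =>
      by_cases hfx : f = x
      · left
        intro t ht
        simp only [Nat.le_zero] at ht
        subst ht
        simpa using hfx
      · right
        refine ⟨f, 0, ⟨hf, hfx⟩, ?_, Or.inl (by simp)⟩
        rw [mpItv_zero]
        ext y
        simp only [mem_diff, mem_setOf_eq, mem_singleton_iff, Nat.le_zero]
        constructor
        · rintro ⟨⟨t, rfl, hty⟩, hyx⟩
          simpa using hty.symm
        · rintro rfl
          exact ⟨⟨0, rfl, by simp⟩, hfx⟩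
    | succ K ihK =>
      set z := (σ ^ (K+1)) f with hz
      have hzE : z ∈ E := mpCyc_pow_mem hcyc hf _
      have hzσ : z = σ ((σ ^ K) f) := mpow_succ_outer σ K f
      by_cases hzx : z = x
      · rcases ihK with hall | ⟨a, m, haE, hset, hw⟩
        · left
          intro t ht
          rcases Nat.lt_or_ge t (K+1) with h | h
          · exact hall t (by omega)
          · have : t = K + 1 := by omega
            subst this
            exact hzx
        · right
          refine ⟨a, m, haE, ?_, Or.inr ⟨hzx, ?_⟩⟩
          · rw [mpSet_succ, ← hz, union_diff_distrib, hset]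
            have : {z} \ {x} = (∅ : Set α) := by
              rw [hzx]; simp
            rw [this, union_empty]
          · rcases hw with h1 | ⟨_, h2⟩
            · rw [h1, ← hzσ, hzx]
            · exact h2
      · rcases ihK with hall | ⟨a, m, haE, hset, hw⟩
        · -- everything up to K was x: forces K = 0, f = x
          have hfx : f = x := by simpa using hall 0 (by omega)
          have hK0 : K = 0 := by
            by_contra hK
            apply hσx
            have h1 := hall 1 (by omega)
            rw [hfx] at h1
            simpa using h1
          right
          refine ⟨z, 0, ⟨hzE, hzx⟩, ?_, Or.inl (by simp [hK0])⟩
          rw [mpItv_zero]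
          ext y
          simp only [mem_diff, mem_setOf_eq, mem_singleton_iff]
          constructor
          · rintro ⟨⟨t, ht, hty⟩, hyx⟩
            have ht1 : t = K + 1 := by
              rcases Nat.lt_or_ge t (K+1) with h | h
              · exfalso; exact hyx (by rw [← hty]; exact hall t (by omega))
              · omega
            rw [← hty, ht1]
          · rintro rfl
            exact ⟨⟨K+1, le_rfl, rfl⟩, hzx⟩
        · -- extend the interval by one
          set w := (τ ^ m) a with hwdef
          have hwmem : w ∈ mpItv τ a m := mpItv_last τ a m
          have hwS : w ∈ {y | ∃ t ≤ K, (σ ^ t) f = y} \ {x} := hset ▸ hwmem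
          have hwx : w ≠ x := hwS.2
          have hτw : τ w = z := by
            rcases hw with h1 | ⟨hKx, hσw⟩
            · have hσwz : σ w = z := by rw [h1, ← hzσ]
              simp only [hτ, Equiv.Perm.mul_apply, hσwz]
              refine Equiv.swap_apply_of_ne_of_ne hzx ?_
              intro hc
              apply hwx
              apply σ.injective
              rw [hσwz, hc]
            · simp only [hτ, Equiv.Perm.mul_apply, hσw, Equiv.swap_apply_left]
              rw [hzσ, hKx]
          right
          refine ⟨a, m + 1, haE, ?_, Or.inl ?_⟩
          · rw [mpSet_succ, ← hz, union_diff_distrib, hset, mpItv_succ]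
            congr 1
            rw [mpow_succ_outer, ← hwdef, hτw]
            ext y
            simp only [mem_diff, mem_singleton_iff]
            exact ⟨fun h => h.1, fun h => ⟨h, by rintro rfl; exact hzx h.symm⟩⟩
          · rw [mpow_succ_outer, ← hwdef, hτw]
  rcases claim K with hall | ⟨a, m, haE, hset, _⟩
  · left
    ext y
    simp only [mem_diff, mem_setOf_eq, mem_singleton_iff, mem_empty_iff_false,
      iff_false, not_and]
    rintro ⟨t, ht, hty⟩
    intro hyx
    exact hyx (by rw [← hty]; exact hall t ht)
  · exact Or.inr ⟨a, m, haE, hset⟩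

end DelItv

section Anchors

variable {σ : Equiv.Perm α} {E : Set α}

/-- If `x` lies in a σ-interval whose deletion is nonempty, the interval contains
`σ⁻¹ x` or `σ x` (as a non-`x` element). -/
lemma mpAnchor (hcyc : IsCyclicOn σ E) {x : α} (hx : x ∈ E)
    (hne : (E \ {x}).Nonempty) {f : α} (K : ℕ)
    (hxS : x ∈ {y | ∃ t ≤ K, (σ ^ t) f = y})
    (hSne : ({y | ∃ t ≤ K, (σ ^ t) f = y} \ {x}).Nonempty) :
    σ⁻¹ x ∈ {y | ∃ t ≤ K, (σ ^ t) f = y} \ {x} ∨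
    σ x ∈ {y | ∃ t ≤ K, (σ ^ t) f = y} \ {x} := by
  classical
  have hσx := mpCyc_sigx_ne hcyc hx hne
  by_cases hfx : f = x
  · right
    obtain ⟨b, ⟨t, ht, htb⟩, hbx⟩ := hSne
    have ht0 : t ≠ 0 := by
      intro h0; subst h0; apply hbx
      rw [Set.mem_singleton_iff, ← htb]; simpa using hfx
    refine ⟨⟨1, by omega, by simp [hfx]⟩, ?_⟩
    rw [Set.mem_singleton_iff]
    exact hσx
  · left
    obtain ⟨s, hsK, hs⟩ := hxS
    have hex : ∃ s, (σ ^ s) f = x := ⟨s, hs⟩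
    set s₀ := Nat.find hex with hs₀def
    have hs₀ : (σ ^ s₀) f = x := Nat.find_spec hex
    have hs₀le : s₀ ≤ K := le_trans (Nat.find_min' hex hs) hsK
    have hs₀0 : s₀ ≠ 0 := by
      intro h0
      rw [h0] at hs₀
      exact hfx (by simpa using hs₀)
    set w := (σ ^ (s₀ - 1)) f with hw
    have hww : σ w = x := by
      rw [hw, ← mpow_succ_outer, show s₀ - 1 + 1 = s₀ by omega]
      exact hs₀
    have hwx : w ≠ x := Nat.find_min hex (m := s₀ - 1) (by omega)
    have hwinv : w = σ⁻¹ x := by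
      rw [← hww]; simp
    rw [← hwinv]
    exact ⟨⟨s₀ - 1, by omega, rfl⟩, hwx⟩

/-- If a σ-interval avoids `x` but contains both `σ x` and `σ⁻¹ x`, it contains all of
`E \ {x}`. -/
lemma mpBothAnchors (hcyc : IsCyclicOn σ E) {x : α} (hx : x ∈ E) {f : α} (hf : f ∈ E)
    (K : ℕ) (hxno : x ∉ {y | ∃ t ≤ K, (σ ^ t) f = y})
    (hL : σ x ∈ {y | ∃ t ≤ K, (σ ^ t) f = y})
    (hR : σ⁻¹ x ∈ {y | ∃ t ≤ K, (σ ^ t) f = y}) :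
    E \ {x} ⊆ {y | ∃ t ≤ K, (σ ^ t) f = y} := by
  -- first: f = σ x
  obtain ⟨u, huK, hu⟩ := hL
  have hu0 : u = 0 := by
    by_contra h0
    apply hxno
    refine ⟨u - 1, by omega, ?_⟩
    have : σ ((σ ^ (u-1)) f) = σ x := by
      rw [← mpow_succ_outer, show u - 1 + 1 = u by omega]; exact hu
    exact σ.injective this
  rw [hu0] at hu
  simp only [pow_zero, Equiv.Perm.coe_one, id_eq] at hu
  -- σ^(t+1) f = x for the R-witness t
  obtain ⟨t, htK, ht⟩ := hR
  have htx : (σ ^ (t+1)) f = x := by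
    rw [mpow_succ_outer, ht]; simp
  have claim : ∀ n : ℕ, (∃ n' ≤ t, (σ ^ n) f = (σ ^ n') f) ∨ (σ ^ n) f = x := by
    intro n
    induction n with
    | zero => exact Or.inl ⟨0, Nat.zero_le _, rfl⟩
    | succ n ihn =>
      rcases ihn with ⟨n', hn', heq⟩ | hnx
      · rcases Nat.lt_or_ge n' t with h | h
        · exact Or.inl ⟨n' + 1, by omega, by rw [mpow_succ_outer, heq, ← mpow_succ_outer]⟩
        · have hn't : n' = t := by omega
          right
          rw [mpow_succ_outer, heq, hn't, ← mpow_succ_outer]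
          exact htx
      · left
        refine ⟨0, Nat.zero_le _, ?_⟩
        rw [mpow_succ_outer, hnx]
        simp only [pow_zero, Equiv.Perm.coe_one, id_eq]
        exact hu.symm
  rintro b ⟨hbE, hbx⟩
  obtain ⟨n, hn⟩ := hcyc.2 f hf b hbE
  rcases claim n with ⟨n', hn', heq⟩ | hnx
  · exact ⟨n', le_trans hn' htK, by rw [← heq, hn]⟩
  · exact absurd (hn ▸ hnx) hbx

end Anchors

/-- Orbit structure: the whole ground set and its pointed complement are τ-intervals. -/
lemma mpOrbit [Fintype α] {τ : Equiv.Perm α} {E' : Set α} (hτcyc : IsCyclicOn τ E')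
    {e z : α} (he : e ∈ E') (hz : z ∈ E') (hzne : z ≠ e) :
    ∃ d : ℕ, 2 ≤ d ∧ E' = mpItv τ e (d-1) ∧ E' \ {e} = mpItv τ (τ e) (d-2) ∧ (τ ^ d) e = e := by
  classical
  have hper : ∃ t, 0 < t ∧ (τ ^ t) e = e := by
    refine ⟨orderOf τ, orderOf_pos τ, ?_⟩
    rw [pow_orderOf_eq_one τ]; simp
  obtain ⟨d, hd0, hde, hdmin⟩ : ∃ d, 0 < d ∧ (τ ^ d) e = e ∧
      ∀ m < d, ¬(0 < m ∧ (τ ^ m) e = e) :=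
    ⟨Nat.find hper, (Nat.find_spec hper).1, (Nat.find_spec hper).2,
      fun m hm => Nat.find_min hper hm⟩
  have hred : ∀ t : ℕ, (τ ^ t) e = (τ ^ (t % d)) e := by
    intro t
    induction t using Nat.strong_induction_on with
    | _ t iht =>
      rcases Nat.lt_or_ge t d with h | h
      · rw [Nat.mod_eq_of_lt h]
      · have h1 : (τ ^ t) e = (τ ^ (t - d)) e := by
          conv_lhs => rw [show t = (t - d) + d by omega]
          rw [pow_add, Equiv.Perm.mul_apply, hde]
        have h2 : t % d = (t - d) % d := Nat.mod_eq_sub_mod h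
        rw [h2, ← iht (t - d) (by omega)]
        exact h1
  have hpowmem : ∀ t : ℕ, (τ ^ t) e ∈ E' := fun t => mpCyc_pow_mem hτcyc he t
  have hEitv : E' = mpItv τ e (d-1) := by
    ext b
    constructor
    · intro hb
      obtain ⟨t, ht⟩ := hτcyc.2 e he b hb
      refine ⟨t % d, ?_, by rw [← hred]; exact ht⟩
      have := Nat.mod_lt t hd0
      omega
    · rintro ⟨t, ht, htb⟩
      rw [← htb]; exact hpowmem t
  have hd2 : 2 ≤ d := by
    rcases Nat.lt_or_ge d 2 with h | h
    · exfalso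
      have hd1 : d = 1 := by omega
      rw [hEitv, hd1] at hz
      simp only [Nat.sub_self] at hz
      rw [mpItv_zero] at hz
      exact hzne hz
    · exact h
  refine ⟨d, hd2, hEitv, ?_, hde⟩
  ext b
  simp only [mem_diff, mem_singleton_iff]
  constructor
  · rintro ⟨hb, hbe⟩
    rw [hEitv] at hb
    obtain ⟨t, ht, htb⟩ := hb
    have ht0 : t ≠ 0 := by
      intro h0; apply hbe; rw [← htb, h0]; simp
    exact ⟨t - 1, by omega, by rw [← mpow_succ_inner, show t - 1 + 1 = t by omega]; exact htb⟩
  · rintro ⟨t, ht, htb⟩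
    have htb' : (τ ^ (t+1)) e = b := by rw [mpow_succ_inner]; exact htb
    constructor
    · rw [← htb']; exact hpowmem _
    · intro hbe
      exact hdmin (t + 1) (by omega) ⟨by omega, by rw [htb', hbe]⟩


end MPHelpers

/-- The class of multi-path matroids is closed under deletion. -/
theorem stmt_3 {α : Type*} [Fintype α] (M : Matroid α) (h : IsMultiPath M)
    (x : α) (hx : x ∈ M.E) : IsMultiPath (mDelete M {x}) := by
  classical
  obtain ⟨σ, r, f, l, A, hcyc, hf, hint, hanti, hpresE, hInd⟩ := h
  have hNE : (mDelete M {x}).E = M.E \ {x} := Matroid.restrict_ground_eq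
  have hNind : ∀ I, (mDelete M {x}).Indep I ↔ M.Indep I ∧ I ⊆ M.E \ {x} := fun I =>
    Matroid.restrict_indep_iff
  rcases eq_empty_or_nonempty (M.E \ {x}) with hE'emp | hE'ne
  · -- degenerate case: empty ground set after deletion
    refine ⟨1, 0, Fin.elim0, Fin.elim0, Fin.elim0, ?_, ?_, ?_, ?_, rfl, ?_⟩
    · rw [hNE, hE'emp]
      exact ⟨fun y _ => rfl, fun y hy => absurd hy (notMem_empty y)⟩
    · exact fun i => i.elim0
    · exact fun i => i.elim0
    · exact fun i => i.elim0
    · intro I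
      rw [hNind I, hNE]
      constructor
      · rintro ⟨_, hIsub⟩
        have hIemp : I = ∅ := subset_empty_iff.mp (hE'emp ▸ hIsub)
        have hvac : ∀ v : I, False := fun v => notMem_empty (v : α) (hIemp ▸ v.2)
        exact ⟨hIsub, fun v => (hvac v).elim, fun v => (hvac v).elim,
          fun v => (hvac v).elim⟩
      · rintro ⟨hIsub, _⟩
        have hIemp : I = ∅ := subset_empty_iff.mp (hE'emp ▸ hIsub)
        rw [hIemp]
        exact ⟨M.empty_indep, empty_subset _⟩
  -- main case
  have hσx : σ x ≠ x := mpCyc_sigx_ne hcyc hx hE'ne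
  set τ : Equiv.Perm α := Equiv.swap x (σ x) * σ with hτdef
  have hτcyc : IsCyclicOn τ (M.E \ {x}) := mpTau_cyc hcyc hx hE'ne
  have hτmem : ∀ y ∈ M.E \ {x}, τ y ∈ M.E \ {x} := fun y hy => mpTau_mem hcyc hx hE'ne hy
  have hτR : τ (σ⁻¹ x) = σ x := by
    simp only [hτdef, Equiv.Perm.mul_apply, Equiv.Perm.inv_def, Equiv.apply_symm_apply,
      Equiv.swap_apply_left]
  have hτRinv : τ⁻¹ (σ x) = σ⁻¹ x := by rw [← hτR]; simp
  have hAsub : ∀ k, A k ⊆ M.E := by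
    intro k y hy
    obtain ⟨K, _, hKset⟩ := hint k
    rw [hKset] at hy
    obtain ⟨t, _, hty⟩ := hy
    rw [← hty]
    exact mpCyc_pow_mem hcyc (hf k) t
  set B : Fin r → Set α := fun k => A k \ {x} with hBdef
  have hBsubE : ∀ k, B k ⊆ M.E \ {x} := fun k => diff_subset_diff_left (hAsub k)
  have hBitv : mpItvP τ (M.E \ {x}) B := by
    intro k
    obtain ⟨K, _, hKset⟩ := hint k
    have hres := mpDel_interval hcyc hx hE'ne (hf k) K
    rw [← hKset] at hres
    exact hres
  have hPartAB : ∀ I : Set α, I ⊆ M.E \ {x} → (mpPart A I ↔ mpPart B I) := by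
    intro I hI
    constructor
    · rintro ⟨φ, hinj, hmem⟩
      refine ⟨φ, hinj, fun v => ⟨hmem v, ?_⟩⟩
      simp only [mem_singleton_iff]
      exact (hI v.2).2
    · exact mpPart_mono fun k => diff_subset
  have hNind' : ∀ I, (mDelete M {x}).Indep I ↔ I ⊆ M.E \ {x} ∧ mpPart B I := by
    intro I
    rw [hNind I, hInd I]
    constructor
    · rintro ⟨⟨_, hmatch⟩, hIE'⟩
      exact ⟨hIE', (hPartAB I hIE').mp hmatch⟩
    · rintro ⟨hIE', hmatch⟩
      exact ⟨⟨hIE'.trans diff_subset, (hPartAB I hIE').mpr hmatch⟩, hIE'⟩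
  have hpairx : ∀ p q, p ≠ q → (B p).Nonempty → B p ⊆ B q → x ∈ A p ∧ x ∉ A q := by
    intro p q hpq hne hsub
    constructor
    · by_contra hxp
      refine hanti p q hpq fun y hy => ?_
      exact (hsub ⟨hy, fun he => hxp (mem_singleton_iff.mp he ▸ hy)⟩).1
    · intro hxq
      refine hanti p q hpq fun y hy => ?_
      by_cases hyx : y = x
      · rw [hyx]; exact hxq
      · exact (hsub ⟨hy, hyx⟩).1
  have hanchor : ∀ k, x ∈ A k → (B k).Nonempty → σ⁻¹ x ∈ B k ∨ σ x ∈ B k := by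
    intro k hxk hne
    obtain ⟨K, _, hKset⟩ := hint k
    rw [hKset] at hxk
    have hne' : ({y | ∃ t ≤ K, (σ ^ t) (f k) = y} \ {x}).Nonempty := by
      obtain ⟨y, hy⟩ := hne
      exact ⟨y, by rw [← hKset]; exact hy⟩
    have := mpAnchor hcyc hx hE'ne K hxk hne'
    show σ⁻¹ x ∈ A k \ {x} ∨ σ x ∈ A k \ {x}
    rw [hKset]
    exact this
  -- Reduce to producing an Sinv-satisfying family presenting the same system
  suffices hfinish : ∃ B₁ : Fin r → Set α, mpItvP τ (M.E \ {x}) B₁ ∧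
      (∀ I : Set α, mpPart B₁ I ↔ mpPart B I) ∧ mpSinv τ B₁ by
    obtain ⟨B₁, hB₁itv, hB₁part, hB₁S⟩ := hfinish
    obtain ⟨C, hCitv, hCpart, hCnopair⟩ :=
      mpIter τ (M.E \ {x}) (fun y hy => hτmem y hy) (∑ k, (B₁ k).ncard) B₁ le_rfl hB₁itv hB₁S
    obtain ⟨r', D, hDint, hDne, hDanti, hDpart⟩ :=
      mpPart_reindex C (P := fun S => ∃ a m, a ∈ M.E \ {x} ∧ S = mpItv τ a m)
        (fun k hk => (hCitv k).resolve_left hk.ne_empty) hCnopair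
    choose af mf haf hDf using hDint
    have hbig : ∀ I, mpPart D I ↔ mpPart B I := fun I =>
      (hDpart I).trans ((hCpart I).trans (hB₁part I))
    refine ⟨τ, r', af, fun i => (τ ^ mf i) (af i), D, ?_, ?_, ?_, hDanti, rfl, ?_⟩
    · rw [hNE]; exact hτcyc
    · intro i; rw [hNE]; exact haf i
    · intro i
      exact ⟨mf i, rfl, hDf i⟩
    · intro I
      rw [hNind' I, hNE]
      constructor
      · rintro ⟨h1, h2⟩
        exact ⟨h1, (hbig I).mpr h2⟩
      · rintro ⟨h1, h2⟩
        exact ⟨h1, (hbig I).mp h2⟩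
  by_cases hfull : ∃ j, B j = M.E \ {x}
  · -- Scenario B: some member is the full punctured ground set
    obtain ⟨js, hjs⟩ := hfull
    have hxAi : ∀ i, i ≠ js → x ∈ A i := by
      intro i hij
      by_contra hxi
      refine hanti i js hij fun y hy => ?_
      have hyne : y ≠ x := fun he => hxi (he ▸ hy)
      have : y ∈ B js := by rw [hjs]; exact ⟨hAsub i hy, hyne⟩
      exact this.1
    have hBne' : ∀ i, i ≠ js → B i ≠ M.E \ {x} := by
      intro i hij hc
      refine hanti js i (Ne.symm hij) fun y hy => ?_
      by_cases hyx : y = x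
      · rw [hyx]; exact hxAi i hij
      · have : y ∈ B i := by rw [hc]; exact ⟨hAsub js hy, hyx⟩
        exact this.1
    by_cases hex : ∃ i, i ≠ js ∧ (B i).Nonempty
    · obtain ⟨i₀, hi₀ne, hi₀⟩ := hex
      have hxi₀ : x ∈ A i₀ := hxAi i₀ hi₀ne
      -- pick a point outside B i₀ (so the cycle has ≥ 2 points)
      obtain ⟨z, hzE', hznB⟩ : ∃ z ∈ M.E \ {x}, z ∉ B i₀ := by
        by_contra hcon
        push_neg at hcon
        exact hBne' i₀ hi₀ne (subset_antisymm (hBsubE i₀) hcon)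
      rcases hanchor i₀ hxi₀ hi₀ with hR | hL
      · -- block R : remove e₀ = σ⁻¹ x from B js
        set e₀ := σ⁻¹ x with he₀def
        have he₀E' : e₀ ∈ M.E \ {x} := hBsubE i₀ hR
        have hze₀ : z ≠ e₀ := fun hc => hznB (hc ▸ hR)
        obtain ⟨d, hd2, hEeq, hEdiff, hde⟩ := mpOrbit hτcyc he₀E' hzE' hze₀
        have hsub₀ : B i₀ ⊆ B js := by rw [hjs]; exact hBsubE i₀
        refine ⟨Function.update B js (B js \ {e₀}), ?_, ?_, ?_⟩
        · intro k
          by_cases hk : k = js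
          · subst hk
            rw [Function.update_self, hjs]
            exact Or.inr ⟨τ e₀, d - 2, hτmem e₀ he₀E', hEdiff⟩
          · rw [Function.update_of_ne hk]; exact hBitv k
        · exact fun I => mpPart_update_iff hi₀ne hR hsub₀ I
        · intro p q hpq hpne hpsub
          by_cases hq : q = js
          · subst hq
            have hp : p ≠ q := hpq
            rw [Function.update_of_ne hp] at hpne hpsub ⊢
            rw [Function.update_self, hjs] at hpsub ⊢
            have hRnp : e₀ ∉ B p := fun hc => (hpsub hc).2 rfl
            have hLp : σ x ∈ B p := by
              rcases hanchor p (hxAi p hp) hpne with h1 | h2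
              · exact absurd h1 hRnp
              · exact h2
            refine ⟨σ x, hLp, Or.inr ?_⟩
            rw [hτRinv]
            exact fun hc => hc.2 rfl
          · by_cases hp : p = js
            · subst hp
              rw [Function.update_self, hjs] at hpne hpsub ⊢
              rw [Function.update_of_ne hq] at hpsub ⊢
              have he₀q : e₀ ∉ B q := by
                intro hc
                apply hBne' q hq
                refine subset_antisymm (hBsubE q) fun y hy => ?_
                by_cases hy₀ : y = e₀
                · rw [hy₀]; exact hc
                · exact hpsub ⟨hy, hy₀⟩
              have hBq : B q = (M.E \ {x}) \ {e₀} := by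
                refine subset_antisymm (fun y hy => ⟨hBsubE q hy, ?_⟩) hpsub
                simp only [mem_singleton_iff]
                exact fun hc => he₀q (hc ▸ hy)
              refine ⟨(τ ^ (d - 2)) (τ e₀), ?_, Or.inl ?_⟩
              · rw [hEdiff]; exact mpItv_last τ (τ e₀) _
              · rw [hBq, hEdiff]
                have hc1 : τ ((τ ^ (d-2)) (τ e₀)) = e₀ := by
                  rw [← mpow_succ_outer, ← mpow_succ_inner,
                    show d - 2 + 1 + 1 = d by omega]
                  exact hde
                rw [hc1]
                rintro ⟨t, ht, hte⟩
                have : (τ ^ (t+1)) e₀ = e₀ := by rw [mpow_succ_inner]; exact hte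
                have hmem : e₀ ∈ mpItv τ (τ e₀) (d-2) := ⟨t, ht, hte⟩
                rw [← hEdiff] at hmem
                exact hmem.2 rfl
            · rw [Function.update_of_ne hp] at hpne hpsub ⊢
              rw [Function.update_of_ne hq] at hpsub ⊢
              exact absurd (hxAi q hq) (hpairx p q hpq hpne hpsub).2
      · -- block L : remove e₀ = σ x from B js
        set e₀ := σ x with he₀def
        have he₀E' : e₀ ∈ M.E \ {x} := hBsubE i₀ hL
        have hze₀ : z ≠ e₀ := fun hc => hznB (hc ▸ hL)
        obtain ⟨d, hd2, hEeq, hEdiff, hde⟩ := mpOrbit hτcyc he₀E' hzE' hze₀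
        have hsub₀ : B i₀ ⊆ B js := by rw [hjs]; exact hBsubE i₀
        refine ⟨Function.update B js (B js \ {e₀}), ?_, ?_, ?_⟩
        · intro k
          by_cases hk : k = js
          · subst hk
            rw [Function.update_self, hjs]
            exact Or.inr ⟨τ e₀, d - 2, hτmem e₀ he₀E', hEdiff⟩
          · rw [Function.update_of_ne hk]; exact hBitv k
        · exact fun I => mpPart_update_iff hi₀ne hL hsub₀ I
        · intro p q hpq hpne hpsub
          by_cases hq : q = js
          · subst hq
            have hp : p ≠ q := hpq
            rw [Function.update_of_ne hp] at hpne hpsub ⊢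
            rw [Function.update_self, hjs] at hpsub ⊢
            have hLnp : e₀ ∉ B p := fun hc => (hpsub hc).2 rfl
            have hRp : σ⁻¹ x ∈ B p := by
              rcases hanchor p (hxAi p hp) hpne with h1 | h2
              · exact h1
              · exact absurd h2 hLnp
            refine ⟨σ⁻¹ x, hRp, Or.inl ?_⟩
            rw [hτR]
            exact fun hc => hc.2 rfl
          · by_cases hp : p = js
            · subst hp
              rw [Function.update_self, hjs] at hpne hpsub ⊢
              rw [Function.update_of_ne hq] at hpsub ⊢
              have he₀q : e₀ ∉ B q := by
                intro hc
                apply hBne' q hq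
                refine subset_antisymm (hBsubE q) fun y hy => ?_
                by_cases hy₀ : y = e₀
                · rw [hy₀]; exact hc
                · exact hpsub ⟨hy, hy₀⟩
              have hBq : B q = (M.E \ {x}) \ {e₀} := by
                refine subset_antisymm (fun y hy => ⟨hBsubE q hy, ?_⟩) hpsub
                simp only [mem_singleton_iff]
                exact fun hc => he₀q (hc ▸ hy)
              refine ⟨(τ ^ (d - 2)) (τ e₀), ?_, Or.inl ?_⟩
              · rw [hEdiff]; exact mpItv_last τ (τ e₀) _
              · rw [hBq, hEdiff]
                have hc1 : τ ((τ ^ (d-2)) (τ e₀)) = e₀ := by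
                  rw [← mpow_succ_outer, ← mpow_succ_inner,
                    show d - 2 + 1 + 1 = d by omega]
                  exact hde
                rw [hc1]
                rintro ⟨t, ht, hte⟩
                have hmem : e₀ ∈ mpItv τ (τ e₀) (d-2) := ⟨t, ht, hte⟩
                rw [← hEdiff] at hmem
                exact hmem.2 rfl
            · rw [Function.update_of_ne hp] at hpne hpsub ⊢
              rw [Function.update_of_ne hq] at hpsub ⊢
              exact absurd (hxAi q hq) (hpairx p q hpq hpne hpsub).2
    · -- all other members empty : no nested pairs at all
      push_neg at hex
      refine ⟨B, hBitv, fun I => Iff.rfl, ?_⟩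
      intro p q hpq hpne hpsub
      exfalso
      by_cases hp : p = js
      · subst hp
        have hq : q ≠ p := Ne.symm hpq
        apply hBne' q hq
        exact subset_antisymm (hBsubE q) (by rw [← hjs]; exact hpsub)
      · obtain ⟨y, hy⟩ := hpne
        rw [hex p hp] at hy
        exact hy
  · -- Scenario A : no member is the full punctured ground set
    push_neg at hfull
    refine ⟨B, hBitv, fun I => Iff.rfl, ?_⟩
    intro p q hpq hpne hpsub
    obtain ⟨hxp, hxq⟩ := hpairx p q hpq hpne hpsub
    have hBfullq : σ x ∈ B q → σ⁻¹ x ∈ B q → False := by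
      intro hL hR
      apply hfull q
      refine subset_antisymm (hBsubE q) ?_
      obtain ⟨K, _, hKset⟩ := hint q
      have hxq' : x ∉ {y | ∃ t ≤ K, (σ ^ t) (f q) = y} := by rw [← hKset]; exact hxq
      have hL' : σ x ∈ {y | ∃ t ≤ K, (σ ^ t) (f q) = y} := by rw [← hKset]; exact hL.1
      have hR' : σ⁻¹ x ∈ {y | ∃ t ≤ K, (σ ^ t) (f q) = y} := by rw [← hKset]; exact hR.1
      have hEsub := mpBothAnchors hcyc hx (hf q) K hxq' hL' hR'
      rw [← hKset] at hEsub
      intro y hy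
      exact ⟨hEsub hy, hy.2⟩
    rcases hanchor p hxp hpne with hR | hL
    · refine ⟨σ⁻¹ x, hR, Or.inl ?_⟩
      rw [hτR]
      intro hc
      exact hBfullq hc (hpsub hR)
    · refine ⟨σ x, hL, Or.inr ?_⟩
      rw [hτRinv]
      intro hc
      exact hBfullq (hpsub hL) hc
end

section
/- For lattice paths P, Q from (0,0) to (m,r) with P never above Q, the map R ↦ {i : the i-th step of R is North} is a bijection from the set 𝒫 of lattice paths from (0,0) to (m,r) lying weakly between P and Q onto the set of bases of the lattice path matroid M[P,Q]. -/
open Set Matroid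

variable {α ι : Type*}

lemma pathHt_mono {n : ℕ} (w : Set (Fin n)) {s t : ℕ} (h : s ≤ t) :
    pathHt w s ≤ pathHt w t :=
  Set.ncard_le_ncard (fun x hx => ⟨hx.1, lt_of_lt_of_le hx.2 h⟩) (Set.toFinite _)

lemma pathHt_succ_mem {n : ℕ} {w : Set (Fin n)} {j : Fin n} (h : j ∈ w) :
    pathHt w ((j : ℕ) + 1) = pathHt w (j : ℕ) + 1 := by
  have hset : w ∩ {x : Fin n | (x : ℕ) < (j : ℕ) + 1}
      = insert j (w ∩ {x : Fin n | (x : ℕ) < (j : ℕ)}) := by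
    ext x
    simp only [Set.mem_inter_iff, Set.mem_setOf_eq, Set.mem_insert_iff]
    constructor
    · rintro ⟨hxw, hxlt⟩
      rcases Nat.lt_succ_iff_lt_or_eq.mp hxlt with h' | h'
      · exact Or.inr ⟨hxw, h'⟩
      · exact Or.inl (Fin.eq_of_val_eq h')
    · rintro (rfl | ⟨hxw, hxlt⟩)
      · exact ⟨h, Nat.lt_succ_self _⟩
      · exact ⟨hxw, Nat.lt_succ_of_lt hxlt⟩
  rw [pathHt, hset, Set.ncard_insert_of_notMem (by simp), pathHt]

lemma pathHt_succ_not_mem {n : ℕ} {w : Set (Fin n)} {j : Fin n} (h : j ∉ w) :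
    pathHt w ((j : ℕ) + 1) = pathHt w (j : ℕ) := by
  unfold pathHt
  congr 1
  ext x
  simp only [Set.mem_inter_iff, Set.mem_setOf_eq]
  constructor
  · rintro ⟨hxw, hxlt⟩
    refine ⟨hxw, ?_⟩
    rcases Nat.lt_succ_iff_lt_or_eq.mp hxlt with h' | h'
    · exact h'
    · exact absurd (Fin.eq_of_val_eq h' ▸ hxw) h
  · exact fun ⟨hxw, hxlt⟩ => ⟨hxw, Nat.lt_succ_of_lt hxlt⟩

lemma pathHt_top {n : ℕ} (w : Set (Fin n)) : pathHt w n = w.ncard := by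
  unfold pathHt
  congr 1
  ext x
  simp [x.isLt]

lemma pathHt_lt {n : ℕ} {w : Set (Fin n)} {x y : Fin n} (hx : x ∈ w)
    (hxy : (x : ℕ) < (y : ℕ)) : pathHt w (x : ℕ) < pathHt w (y : ℕ) :=
  calc pathHt w (x : ℕ) < pathHt w (x : ℕ) + 1 := Nat.lt_succ_self _
    _ = pathHt w ((x : ℕ) + 1) := (pathHt_succ_mem hx).symm
    _ ≤ pathHt w (y : ℕ) := pathHt_mono w hxy

lemma ncard_Ico_nat (a b : ℕ) : (Set.Ico a b).ncard = b - a := by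
  rw [← Finset.coe_Ico, Set.ncard_coe_finset, Nat.card_Ico]

/-- For lattice paths `P, Q` from `(0,0)` to `(m,r)` with `P` never above `Q`, the map
sending a path to its set of North-step positions is a bijection from the set of lattice
paths lying weakly between `P` and `Q` onto the set of bases of the lattice path matroid
`M[P,Q]`.  (Paths are encoded by their sets of North-step positions, so the map is the
identity and the statement is that the two collections coincide.) -/
theorem stmt_10 (m r : ℕ) (P Q : Set (Fin (m + r)))
    (hP : pathHt P (m + r) = r) (hQ : pathHt Q (m + r) = r)
    (hPQ : ∀ t ≤ m + r, pathHt P t ≤ pathHt Q t)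
    (M : Matroid (Fin (m + r)))
    (hM : IsTransversalPres M (Set.univ : Set (Fin (m + r)))
      (fun i : Fin r => {j | ∃ R, IsPathBetween m r P Q R ∧ j ∈ R ∧
          pathHt R ((j : ℕ) + 1) = (i : ℕ) + 1})) :
    ∀ R : Set (Fin (m + r)), IsPathBetween m r P Q R ↔ M.IsBase R := by
  classical
  obtain ⟨hE, hIndep⟩ := hM
  -- any path between P and Q has `ncard = r`
  have hsize : ∀ w : Set (Fin (m + r)), IsPathBetween m r P Q w → w.ncard = r := by
    intro w hw
    rw [← pathHt_top w, hw.1]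
  -- any path between P and Q is independent
  have hindep : ∀ w : Set (Fin (m + r)), IsPathBetween m r P Q w → M.Indep w := by
    intro w hw
    rw [hIndep]
    refine ⟨Set.subset_univ _, ?_⟩
    have hlt : ∀ x : Fin (m + r), x ∈ w → pathHt w (x : ℕ) < r := by
      intro x hx
      have h1 : pathHt w ((x : ℕ) + 1) ≤ pathHt w (m + r) := pathHt_mono w x.isLt
      rw [pathHt_succ_mem hx] at h1
      have h2 := hw.1
      omega
    refine ⟨fun x => ⟨pathHt w ((x : Fin (m + r)) : ℕ), hlt x x.2⟩, ?_, ?_⟩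
    · intro x y hxy
      have hval : pathHt w ((x : Fin (m + r)) : ℕ) = pathHt w ((y : Fin (m + r)) : ℕ) :=
        congrArg Fin.val hxy
      rcases lt_trichotomy ((x : Fin (m + r)) : ℕ) ((y : Fin (m + r)) : ℕ) with h | h | h
      · exact absurd hval (Nat.ne_of_lt (pathHt_lt x.2 h))
      · exact Subtype.ext (Fin.eq_of_val_eq h)
      · exact absurd hval.symm (Nat.ne_of_lt (pathHt_lt y.2 h))
    · intro x
      refine ⟨w, hw, x.2, ?_⟩
      simp [pathHt_succ_mem x.2]
  -- any independent set has `ncard ≤ r`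
  have hcard_le : ∀ I : Set (Fin (m + r)), M.Indep I → I.ncard ≤ r := by
    intro I hI
    obtain ⟨-, φ, hinj, -⟩ := (hIndep I).mp hI
    have h1 : Nat.card I ≤ Nat.card (Fin r) := Nat.card_le_card_of_injective φ hinj
    rwa [Nat.card_coe_set_eq, Nat.card_eq_fintype_card, Fintype.card_fin] at h1
  -- any path between P and Q is a base
  have hbase : ∀ w : Set (Fin (m + r)), IsPathBetween m r P Q w → M.IsBase w := by
    intro w hw
    refine (hindep w hw).isBase_of_maximal fun J hJ hsub => ?_
    exact Set.eq_of_subset_of_ncard_le hsub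
      (by rw [hsize w hw]; exact hcard_le J hJ) (Set.toFinite J)
  intro R
  refine ⟨hbase R, fun hR => ?_⟩
  have hPpath : IsPathBetween m r P Q P := ⟨hP, fun t ht => ⟨le_refl _, hPQ t ht⟩⟩
  have hcardR : R.ncard = r := by
    rw [hR.ncard_eq_ncard_of_isBase (hbase P hPpath), hsize P hPpath]
  obtain ⟨-, φ, hinj, hmem⟩ := (hIndep R).mp hR.indep
  -- key: if j can be the (i+1)-st North step of a path between P and Q, then
  -- `pathHt P j ≤ i` and `i + 1 ≤ pathHt Q (j+1)`
  have hkey : ∀ (j : Fin (m + r)) (i : Fin r),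
      (∃ w, IsPathBetween m r P Q w ∧ j ∈ w ∧ pathHt w ((j : ℕ) + 1) = (i : ℕ) + 1) →
      pathHt P (j : ℕ) ≤ (i : ℕ) ∧ (i : ℕ) + 1 ≤ pathHt Q ((j : ℕ) + 1) := by
    rintro j i ⟨w, hw, hjw, hht⟩
    have hstep := pathHt_succ_mem hjw
    have h1 : pathHt w (j : ℕ) = (i : ℕ) := by omega
    constructor
    · rw [← h1]; exact (hw.2 (j : ℕ) (le_of_lt j.isLt)).1
    · rw [← hht]; exact (hw.2 ((j : ℕ) + 1) j.isLt).2
  refine ⟨by rw [pathHt_top, hcardR], fun t ht => ?_⟩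
  have hcle : pathHt R t ≤ r := by
    have h1 : pathHt R t ≤ pathHt R (m + r) := pathHt_mono R ht
    rw [pathHt_top, hcardR] at h1
    exact h1
  -- the extension of φ to all of Fin (m+r), valued in ℕ
  set f : Fin (m + r) → ℕ := fun j => if h : j ∈ R then (φ ⟨j, h⟩ : ℕ) else 0 with hf
  have hinj' : ∀ s : Set (Fin (m + r)), s ⊆ R → Set.InjOn f s := by
    intro s hs a ha b hb hab
    simp only [hf, dif_pos (hs ha), dif_pos (hs hb)] at hab
    exact congrArg Subtype.val (hinj (Fin.eq_of_val_eq hab : φ ⟨a, hs ha⟩ = φ ⟨b, hs hb⟩))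
  constructor
  · -- lower bound: pathHt P t ≤ pathHt R t
    have hPt : pathHt P t ≤ r := by
      have h1 : pathHt P t ≤ pathHt P (m + r) := pathHt_mono P ht
      omega
    have hsplit : (R \ {j : Fin (m + r) | (j : ℕ) < t}).ncard + pathHt R t = r := by
      have h2 := Set.ncard_diff_add_ncard_of_subset
        (Set.inter_subset_left (s := R) (t := {j : Fin (m + r) | (j : ℕ) < t}))
        (Set.toFinite R)
      rw [Set.diff_self_inter] at h2
      rw [pathHt]
      omega
    have hmap : ∀ j ∈ R \ {j : Fin (m + r) | (j : ℕ) < t},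
        f j ∈ Set.Ico (pathHt P t) r := by
      rintro j ⟨hjR, hjt⟩
      have hk := (hkey j (φ ⟨j, hjR⟩) (hmem ⟨j, hjR⟩)).1
      have hmono : pathHt P t ≤ pathHt P (j : ℕ) := pathHt_mono P (by simpa using hjt)
      simp only [hf, dif_pos hjR, Set.mem_Ico]
      exact ⟨le_trans hmono hk, (φ ⟨j, hjR⟩).isLt⟩
    have h3 := Set.ncard_le_ncard_of_injOn f hmap
      (hinj' _ Set.diff_subset) (Set.finite_Ico _ _)
    rw [_root_.ncard_Ico_nat] at h3
    omega
  · -- upper bound: pathHt R t ≤ pathHt Q t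
    have hmap : ∀ j ∈ R ∩ {j : Fin (m + r) | (j : ℕ) < t},
        f j ∈ Set.Iio (pathHt Q t) := by
      rintro j ⟨hjR, hjt⟩
      have hk := (hkey j (φ ⟨j, hjR⟩) (hmem ⟨j, hjR⟩)).2
      have hmono : pathHt Q ((j : ℕ) + 1) ≤ pathHt Q t := pathHt_mono Q hjt
      simp only [hf, dif_pos hjR, Set.mem_Iio]
      omega
    have h3 := Set.ncard_le_ncard_of_injOn f hmap
      (hinj' _ Set.inter_subset_left) (Set.finite_Iio _)
    rw [show Set.Iio (pathHt Q t) = Set.Ico 0 (pathHt Q t) by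
        ext x; simp, _root_.ncard_Ico_nat] at h3
    rw [pathHt]
    omega
end

section
/- Let M[ℐ] be a multi-path matroid that is not a lattice path matroid. Then every element of the ground set lies in a spanning circuit of M[ℐ]. In particular, M[ℐ] has a spanning circuit. Specifically, if F = {f_I : I ∈ ℐ} is the set of first elements of the intervals, then for every x ∉ F the set F ∪ {x} is a spanning circuit. -/
open Set Matroid

variable {α ι : Type*}

private lemma ppa {α : Type*} (σ : Equiv.Perm α) (a b : ℕ) (x : α) :
    (σ ^ a) ((σ ^ b) x) = (σ ^ (a + b)) x := by
  rw [← Equiv.Perm.mul_apply, ← pow_add]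

/-- A multi-path matroid `M[ℐ]` that is not a lattice path matroid has a spanning
circuit; indeed every element lies in a spanning circuit, and specifically for the set
`F = {f_I : I ∈ ℐ}` of first elements of the intervals, `F ∪ {x}` is a spanning circuit
for every `x ∉ F` in the ground set. -/
theorem stmt_13 {α : Type*} [Fintype α] (M : Matroid α) (σ : Equiv.Perm α) {r : ℕ}
    (f l : Fin r → α) (A : Fin r → Set α) (hpres : IsMultiPathPres M σ f l A)
    (hnl : ¬ IsLatticePathM M) :
    (∃ C, IsCircuitOf M C ∧ M.Spanning C) ∧
    (∀ x ∈ M.E, ∃ C, x ∈ C ∧ IsCircuitOf M C ∧ M.Spanning C) ∧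
    (∀ x ∈ M.E, x ∉ Set.range f →
      IsCircuitOf M (Set.range f ∪ {x}) ∧ M.Spanning (Set.range f ∪ {x})) := by
  classical
  obtain ⟨⟨hfix, htrans⟩, hfE, hint, hac, htr⟩ := hpres
  have hInd : ∀ I : Set α, M.Indep I ↔ I ⊆ M.E ∧
      ∃ φ : I → Fin r, Function.Injective φ ∧ ∀ x : I, (x : α) ∈ A (φ x) := htr.2
  -- dispose of the case r = 0
  rcases Nat.eq_zero_or_pos r with hr0 | hrpos
  · exfalso
    apply hnl
    subst hr0
    refine ⟨fun x => (Fintype.equivFin α x : ℕ), ?_, 0, Fin.elim0, Fin.elim0, Fin.elim0,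
      (fun i => i.elim0), (fun i => i.elim0), (fun i _ _ => i.elim0), rfl, ?_⟩
    · intro x _ y _ h
      exact (Fintype.equivFin α).injective (Fin.val_injective h)
    · intro I
      rw [hInd I]
      constructor
      · rintro ⟨hIE, φ, hinj, -⟩
        exact ⟨hIE, φ, hinj, fun x => (φ x).elim0⟩
      · rintro ⟨hIE, φ, hinj, -⟩
        exact ⟨hIE, φ, hinj, fun x => (φ x).elim0⟩
  -- basic facts about σ on E
  have hme : ∀ x ∈ M.E, σ x ∈ M.E := by
    intro x hx
    by_contra h
    have h3 : σ x = x := σ.injective (hfix _ h)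
    rw [h3] at h; exact h hx
  have hpowE : ∀ x ∈ M.E, ∀ t, (σ ^ t) x ∈ M.E := by
    intro x hx t
    induction t with
    | zero => simpa using hx
    | succ t ih =>
      have h1 : (σ ^ (t+1)) x = σ ((σ ^ t) x) := by rw [pow_succ']; rfl
      rw [h1]; exact hme _ ih
  -- the period n
  set e0 := f ⟨0, hrpos⟩ with he0def
  have he0 : e0 ∈ M.E := hfE _
  have hper : ∃ m, 0 < m ∧ (σ ^ m) e0 = e0 :=
    ⟨orderOf σ, orderOf_pos σ, by rw [pow_orderOf_eq_one]; rfl⟩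
  set n := Nat.find hper with hndef
  obtain ⟨hnpos, hne0⟩ : 0 < n ∧ (σ ^ n) e0 = e0 := Nat.find_spec hper
  have hnmin : ∀ m, 0 < m → m < n → (σ ^ m) e0 ≠ e0 := by
    intro m hm1 hm2 heq
    exact Nat.find_min hper hm2 ⟨hm1, heq⟩
  have hperiod : ∀ x ∈ M.E, (σ ^ n) x = x := by
    intro x hx
    obtain ⟨m, hm⟩ := htrans e0 he0 x hx
    rw [← hm, ppa, Nat.add_comm, ← ppa, hne0]
  have hL1 : ∀ x ∈ M.E, ∀ d, 0 < d → d < n → (σ ^ d) x ≠ x := by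
    intro x hx d hd1 hd2 heq
    obtain ⟨m, hm⟩ := htrans e0 he0 x hx
    apply hnmin d hd1 hd2
    apply (σ ^ m).injective
    rw [ppa, Nat.add_comm, ← ppa, hm]
    exact heq
  have huniq : ∀ c ∈ M.E, ∀ t1 t2, t1 < n → t2 < n → (σ ^ t1) c = (σ ^ t2) c → t1 = t2 := by
    have key : ∀ c ∈ M.E, ∀ t1 t2, t1 ≤ t2 → t2 < n → (σ ^ t1) c = (σ ^ t2) c → t1 = t2 := by
      intro c hc t1 t2 hle h2 heq
      by_contra hne
      have hlt : t1 < t2 := lt_of_le_of_ne hle hne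
      have : (σ ^ (t2 - t1)) ((σ ^ t1) c) = (σ ^ t1) c := by
        rw [ppa, Nat.sub_add_cancel hle]
        exact heq.symm
      exact hL1 _ (hpowE c hc t1) (t2 - t1) (by omega) (by omega) this
    intro c hc t1 t2 h1 h2 heq
    rcases le_total t1 t2 with h | h
    · exact key c hc t1 t2 h h2 heq
    · exact (key c hc t2 t1 h h1 heq.symm).symm
  have hnq : ∀ q, ∀ x ∈ M.E, (σ ^ (n * q)) x = x := by
    intro q
    induction q with
    | zero => intro x _; simp
    | succ q ih =>
      intro x hx
      have : n * (q + 1) = n * q + n := by ring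
      rw [this, ← ppa, hperiod x hx, ih x hx]
  have hmod : ∀ x ∈ M.E, ∀ m, (σ ^ m) x = (σ ^ (m % n)) x := by
    intro x hx m
    conv_lhs => rw [show m = n * (m / n) + m % n from (Nat.div_add_mod m n).symm]
    rw [← ppa]
    exact hnq (m / n) _ (hpowE x hx _)
  -- position function
  set pos : α → α → ℕ := fun c x => if h : ∃ t, (σ ^ t) c = x then Nat.find h else 0 with hposdef
  have hpos1 : ∀ c ∈ M.E, ∀ x ∈ M.E, (σ ^ pos c x) c = x := by
    intro c hc x hx
    have h : ∃ t, (σ ^ t) c = x := htrans c hc x hx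
    simp only [hposdef, dif_pos h]
    exact Nat.find_spec h
  have hpos2 : ∀ c ∈ M.E, ∀ x ∈ M.E, pos c x < n := by
    intro c hc x hx
    have h : ∃ t, (σ ^ t) c = x := htrans c hc x hx
    obtain ⟨t, ht⟩ := h
    have hw : (σ ^ (t % n)) c = x := by rw [← hmod c hc]; exact ht
    have : pos c x ≤ t % n := by
      simp only [hposdef, dif_pos (⟨t, ht⟩ : ∃ t, (σ ^ t) c = x)]
      exact Nat.find_le hw
    exact lt_of_le_of_lt this (Nat.mod_lt _ hnpos)
  have hpos3 : ∀ c ∈ M.E, ∀ t, t < n → pos c ((σ ^ t) c) = t := by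
    intro c hc t ht
    have hxE : (σ ^ t) c ∈ M.E := hpowE c hc t
    exact huniq c hc _ t (hpos2 c hc _ hxE) ht (hpos1 c hc _ hxE)
  -- interval lengths
  set K : Fin r → ℕ := fun i => Classical.choose (hint i) with hKdef
  have hK : ∀ i, (σ ^ K i) (f i) = l i ∧ A i = {x | ∃ j ≤ K i, (σ ^ j) (f i) = x} :=
    fun i => Classical.choose_spec (hint i)
  have hAi : ∀ i, A i = {x | ∃ j ≤ K i, (σ ^ j) (f i) = x} := fun i => (hK i).2
  have hmemA : ∀ i, ∀ t, t ≤ K i → (σ ^ t) (f i) ∈ A i := by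
    intro i t ht
    rw [hAi i]
    exact ⟨t, ht, rfl⟩
  have hfA : ∀ i, f i ∈ A i := by
    intro i
    have := hmemA i 0 (Nat.zero_le _)
    simpa using this
  have hAE : ∀ i, A i ⊆ M.E := by
    intro i x hx
    rw [hAi i] at hx
    obtain ⟨j, -, rfl⟩ := hx
    exact hpowE _ (hfE i) j
  -- Case I : some interval is everything
  by_cases hfull : ∃ i, A i = M.E
  · exfalso
    apply hnl
    obtain ⟨i0, hi0⟩ := hfull
    refine ⟨pos e0, ?_, r, A, fun _ => 0, fun _ => n - 1, ?_, fun i => ⟨f i, hfA i⟩,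
      hac, htr⟩
    · intro x hx y hy h
      rw [← hpos1 e0 he0 x hx, ← hpos1 e0 he0 y hy, h]
    · intro i
      have hii0 : i = i0 := by
        by_contra hne
        exact hac i i0 hne (hi0 ▸ hAE i)
      rw [hii0, hi0]
      ext x
      simp only [Set.mem_setOf_eq]
      constructor
      · intro hx
        exact ⟨hx, Nat.zero_le _, by have := hpos2 e0 he0 x hx; omega⟩
      · intro hx
        exact hx.1
  push_neg at hfull
  have hKn : ∀ i, K i < n := by
    intro i
    by_contra h
    push_neg at h
    apply hfull i
    refine Set.Subset.antisymm (hAE i) ?_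
    intro x hx
    rw [hAi i]
    refine ⟨pos (f i) x, ?_, hpos1 _ (hfE i) x hx⟩
    have := hpos2 (f i) (hfE i) x hx
    omega
  have hfinj : Function.Injective f := by
    intro i j hij
    by_contra hne
    have hsub : ∀ i j : Fin r, f i = f j → K i ≤ K j → A i ⊆ A j := by
      intro i j hf hk x hx
      rw [hAi i] at hx
      obtain ⟨t, ht, rfl⟩ := hx
      rw [hf]
      exact hmemA j t (le_trans ht hk)
    rcases le_total (K i) (K j) with h | h
    · exact hac i j hne (hsub i j hij h)
    · exact hac j i (Ne.symm hne) (hsub j i hij.symm h)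
  -- Dichotomy : is there a cut point?
  by_cases hcut : ∃ c ∈ M.E, ∀ i, ∀ s, 1 ≤ s → s ≤ K i → (σ ^ s) (f i) ≠ c
  · -- a cut exists : M is a lattice path matroid, contradiction
    exfalso
    apply hnl
    obtain ⟨c, hcE, hnc⟩ := hcut
    have hbound : ∀ i, pos c (f i) + K i ≤ n - 1 := by
      intro i
      by_contra h
      push_neg at h
      set p := pos c (f i) with hpdef
      have hp1 : (σ ^ p) c = f i := hpos1 c hcE _ (hfE i)
      have hp2 : p < n := hpos2 c hcE _ (hfE i)
      have hs : (σ ^ (n - p)) (f i) = c := by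
        rw [← hp1, ppa, Nat.sub_add_cancel (le_of_lt hp2)]
        exact hperiod c hcE
      exact hnc i (n - p) (by omega) (by omega) hs
    refine ⟨pos c, ?_, r, A, fun i => pos c (f i), fun i => pos c (f i) + K i,
      ?_, fun i => ⟨f i, hfA i⟩, hac, htr⟩
    · intro x hx y hy h
      rw [← hpos1 c hcE x hx, ← hpos1 c hcE y hy, h]
    · intro i
      have hp1 : (σ ^ pos c (f i)) c = f i := hpos1 c hcE _ (hfE i)
      ext x
      rw [hAi i]
      simp only [Set.mem_setOf_eq]
      constructor
      · rintro ⟨t, ht, rfl⟩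
        have hxE : (σ ^ t) (f i) ∈ M.E := hpowE _ (hfE i) t
        have hx2 : (σ ^ (t + pos c (f i))) c = (σ ^ t) (f i) := by
          rw [← ppa, hp1]
        have hlt : t + pos c (f i) < n := by
          have := hbound i
          omega
        have hposx : pos c ((σ ^ t) (f i)) = t + pos c (f i) := by
          rw [← hx2]
          exact hpos3 c hcE _ hlt
        exact ⟨hxE, by omega, by omega⟩
      · rintro ⟨hxE, h1, h2⟩
        refine ⟨pos c x - pos c (f i), by omega, ?_⟩
        have h3 : (σ ^ (pos c x - pos c (f i))) (f i)
            = (σ ^ (pos c x - pos c (f i) + pos c (f i))) c := by rw [← ppa, hp1]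
        have h4 : pos c x - pos c (f i) + pos c (f i) = pos c x := by omega
        rw [h3, h4]
        exact hpos1 c hcE x hxE
  -- Main case : every point is wrapped by some interval
  push_neg at hcut
  have hnext : ∀ j, ∃ s, 1 ≤ s ∧ s ≤ K j ∧ ∃ i, (σ ^ s) (f j) = f i := by
    intro j
    have hcE : (σ ^ (K j + 1)) (f j) ∈ M.E := hpowE _ (hfE j) _
    obtain ⟨i, s', hs1, hsK, hsc⟩ := hcut _ hcE
    set p := pos (f j) (f i) with hpdef
    have hp1 : (σ ^ p) (f j) = f i := hpos1 _ (hfE j) _ (hfE i)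
    have hp2 : p < n := hpos2 _ (hfE j) _ (hfE i)
    have hu : (σ ^ (s' + p)) (f j) = (σ ^ (K j + 1)) (f j) := by
      rw [← ppa, hp1]
      exact hsc
    have hcong : (s' + p) % n = (K j + 1) % n := by
      apply huniq (f j) (hfE j) _ _ (Nat.mod_lt _ hnpos) (Nat.mod_lt _ hnpos)
      rw [← hmod _ (hfE j), ← hmod _ (hfE j)]
      exact hu
    have hKin : K i < n := hKn i
    have hKjn : K j < n := hKn j
    have hdisj : s' + p = K j + 1 ∨ s' + p = K j + 1 + n := by
      rcases Nat.lt_or_ge (s' + p) n with h | h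
      · rw [Nat.mod_eq_of_lt h] at hcong
        by_cases hv : K j + 1 < n
        · rw [Nat.mod_eq_of_lt hv] at hcong; left; omega
        · have hv' : K j + 1 = n := by omega
          rw [hv', Nat.mod_self] at hcong
          omega
      · have hlt : s' + p - n < n := by omega
        rw [Nat.mod_eq_sub_mod h, Nat.mod_eq_of_lt hlt] at hcong
        by_cases hv : K j + 1 < n
        · rw [Nat.mod_eq_of_lt hv] at hcong; right; omega
        · have hv' : K j + 1 = n := by omega
          rw [hv', Nat.mod_self] at hcong
          left; omega
    rcases hdisj with hcase | hcase
    · have hp0 : p ≠ 0 := by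
        intro h0
        have hfij : f j = f i := by rw [← hp1, h0]; simp
        have hij : i = j := hfinj hfij.symm
        rw [hij] at hsK
        omega
      exact ⟨p, by omega, by omega, i, hp1⟩
    · exfalso
      have hij : f i ≠ f j := by
        intro h
        have hp0 : 0 < p := by omega
        exact hL1 (f j) (hfE j) p hp0 hp2 (by rw [hp1, h])
      have hij' : i ≠ j := fun h => hij (by rw [h])
      apply hac j i (Ne.symm hij')
      intro x hx
      rw [hAi j] at hx
      obtain ⟨t, ht, rfl⟩ := hx
      rw [hAi i]
      refine ⟨t + n - p, by omega, ?_⟩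
      have h5 : (σ ^ (t + n - p)) (f i) = (σ ^ (t + n)) (f j) := by
        rw [← hp1, ppa]
        have he : t + n - p + p = t + n := by omega
        rw [he]
      rw [h5]
      have h6 : (σ ^ (t + n)) (f j) = (σ ^ t) ((σ ^ n) (f j)) := (ppa σ t n (f j)).symm
      rw [h6, hperiod _ (hfE j)]
  -- the successor map on first elements
  have hSex : ∀ j, ∃ s, 1 ≤ s ∧ ∃ i, (σ ^ s) (f j) = f i := by
    intro j
    obtain ⟨s, hs1, -, i, hi⟩ := hnext j
    exact ⟨s, hs1, i, hi⟩
  set S : Fin r → ℕ := fun j => Nat.find (hSex j) with hSdef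
  have hS1 : ∀ j, 1 ≤ S j ∧ ∃ i, (σ ^ S j) (f j) = f i := fun j => Nat.find_spec (hSex j)
  have hSK : ∀ j, S j ≤ K j := by
    intro j
    obtain ⟨s, hs1, hs2, i, hi⟩ := hnext j
    exact le_trans (Nat.find_le ⟨hs1, i, hi⟩) hs2
  set nxt : Fin r → Fin r := fun j => Classical.choose (hS1 j).2 with hnxtdef
  have hnxt1 : ∀ j, (σ ^ S j) (f j) = f (nxt j) := fun j => Classical.choose_spec (hS1 j).2
  have hSpos : ∀ j, 1 ≤ S j := fun j => (hS1 j).1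
  have hSn : ∀ j, S j < n := fun j => lt_of_le_of_lt (hSK j) (hKn j)
  have hnxtA : ∀ j, f (nxt j) ∈ A j := by
    intro j
    rw [← hnxt1 j]
    exact hmemA j _ (hSK j)
  -- reachability
  have hreach0 : ∀ d j i, pos (f j) (f i) = d → ∃ m, nxt^[m] j = i := by
    intro d
    induction d using Nat.strong_induction_on with
    | _ d ih =>
      intro j i hd
      rcases Nat.eq_zero_or_pos d with h0 | hdpos
      · subst h0
        have hfij : f j = f i := by
          have h1 := hpos1 (f j) (hfE j) (f i) (hfE i)
          rw [hd] at h1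
          simpa using h1
        exact ⟨0, by simpa using hfinj hfij⟩
      · have hdn : d < n := hd ▸ hpos2 (f j) (hfE j) (f i) (hfE i)
        have hfd : (σ ^ d) (f j) = f i := by
          rw [← hd]; exact hpos1 (f j) (hfE j) (f i) (hfE i)
        have hSd : S j ≤ d := Nat.find_le ⟨hdpos, i, hfd⟩
        have hnew : pos (f (nxt j)) (f i) = d - S j := by
          have h1 : (σ ^ (d - S j)) (f (nxt j)) = f i := by
            rw [← hnxt1 j, ppa, Nat.sub_add_cancel hSd]
            exact hfd
          rw [← h1]
          exact hpos3 (f (nxt j)) (hfE _) _ (by omega)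
        obtain ⟨m, hm⟩ := ih (d - S j) (by have := hSpos j; omega) (nxt j) i hnew
        exact ⟨m + 1, by rw [Function.iterate_succ_apply]; exact hm⟩
  have hreach : ∀ j i, ∃ m, nxt^[m] j = i := fun j i => hreach0 _ j i rfl
  -- basic facts about F
  have hFE : Set.range f ⊆ M.E := by rintro x ⟨i, rfl⟩; exact hfE i
  have hIndF : M.Indep (Set.range f) := by
    rw [hInd]
    refine ⟨hFE, fun y => Classical.choose y.2, ?_, ?_⟩
    · intro y1 y2 h
      apply Subtype.ext
      rw [← Classical.choose_spec y1.2, ← Classical.choose_spec y2.2]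
      exact congrArg f h
    · intro y
      have h := Classical.choose_spec y.2
      rw [← h]
      exact hfA _
  have hcard : ∀ I, M.Indep I → I.ncard ≤ r := by
    intro I hI
    rw [hInd] at hI
    obtain ⟨hIE, φ, hinj, -⟩ := hI
    have h1 : Nat.card I ≤ Nat.card (Fin r) := Nat.card_le_card_of_injective φ hinj
    calc I.ncard = Nat.card I := (Nat.card_coe_set_eq I).symm
      _ ≤ Nat.card (Fin r) := h1
      _ = r := by simp
  have hFcard : (Set.range f).ncard = r := by
    rw [← Nat.card_coe_set_eq, Nat.card_range_of_injective hfinj,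
      Nat.card_eq_fintype_card, Fintype.card_fin]
  -- key independence
  have hDindep : ∀ x ∈ M.E, x ∉ Set.range f → ∀ j,
      M.Indep ((Set.range f \ {f j}) ∪ {x}) := by
    intro x hx hxF j
    obtain ⟨i1, s1, hs11, hs1K, hs1x⟩ := hcut x hx
    have hxA : x ∈ A i1 := by rw [← hs1x]; exact hmemA i1 s1 hs1K
    have hm0 := hreach j i1
    set m := Nat.find hm0 with hmdef
    have hmspec : nxt^[m] j = i1 := Nat.find_spec hm0
    have hmmin : ∀ a, a < m → nxt^[a] j ≠ i1 := fun a ha => Nat.find_min hm0 ha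
    have hdist : ∀ a b, a < b → b ≤ m → nxt^[a] j ≠ nxt^[b] j := by
      intro a b hab hbm heq
      have h2 : nxt^[m - b] (nxt^[b] j) = i1 := by
        rw [← Function.iterate_add_apply, Nat.sub_add_cancel hbm]
        exact hmspec
      rw [← heq, ← Function.iterate_add_apply] at h2
      exact hmmin (m - b + a) (by omega) h2
    have hDmem : ∀ y, y ∈ (Set.range f \ {f j}) ∪ {x} → y ≠ x → ∃ i, f i = y ∧ i ≠ j := by
      intro y hy hyx
      rcases (Set.mem_union _ _ _).mp hy with h | h
      · obtain ⟨i, rfl⟩ := h.1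
        refine ⟨i, rfl, ?_⟩
        intro hij
        apply h.2
        rw [hij]
        exact Set.mem_singleton _
      · exact absurd (Set.mem_singleton_iff.mp h) hyx
    rw [hInd]
    refine ⟨?_, ?_⟩
    · intro y hy
      rcases (Set.mem_union _ _ _).mp hy with h | h
      · exact hFE h.1
      · rw [Set.mem_singleton_iff.mp h]; exact hx
    refine ⟨fun y => if hxy : (y : α) = x then i1
        else if h : ∃ a, a < m ∧ (y : α) = f (nxt^[a+1] j) then nxt^[Nat.find h] j
        else Classical.choose (hDmem y y.2 hxy), ?_, ?_⟩
    · -- injectivity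
      intro y1 y2 heq
      dsimp only at heq
      by_cases hxy1 : (y1 : α) = x
      · rw [dif_pos hxy1] at heq
        by_cases hxy2 : (y2 : α) = x
        · exact Subtype.ext (by rw [hxy1, hxy2])
        · rw [dif_neg hxy2] at heq
          by_cases h2 : ∃ a, a < m ∧ (y2 : α) = f (nxt^[a+1] j)
          · rw [dif_pos h2] at heq
            exact absurd heq.symm (hmmin _ (Nat.find_spec h2).1)
          · rw [dif_neg h2] at heq
            exfalso
            obtain ⟨hfy2, hi2j⟩ := Classical.choose_spec (hDmem y2 y2.2 hxy2)
            rcases Nat.eq_zero_or_pos m with hm' | hm'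
            · apply hi2j
              rw [← heq, ← hmspec, hm']
              simp
            · apply h2
              refine ⟨m - 1, by omega, ?_⟩
              rw [← hfy2, ← heq, ← hmspec]
              have he : m - 1 + 1 = m := by omega
              rw [he]
      · rw [dif_neg hxy1] at heq
        by_cases h1 : ∃ a, a < m ∧ (y1 : α) = f (nxt^[a+1] j)
        · rw [dif_pos h1] at heq
          obtain ⟨ha1, hy1⟩ := Nat.find_spec h1
          by_cases hxy2 : (y2 : α) = x
          · rw [dif_pos hxy2] at heq
            exact absurd heq (hmmin _ ha1)
          · rw [dif_neg hxy2] at heq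
            by_cases h2 : ∃ a, a < m ∧ (y2 : α) = f (nxt^[a+1] j)
            · rw [dif_pos h2] at heq
              obtain ⟨ha2, hy2⟩ := Nat.find_spec h2
              have haa : Nat.find h1 = Nat.find h2 := by
                by_contra hne
                rcases Nat.lt_or_ge (Nat.find h1) (Nat.find h2) with hlt | hge
                · exact hdist _ _ hlt (le_of_lt ha2) heq
                · exact hdist _ _ (by omega) (le_of_lt ha1) heq.symm
              apply Subtype.ext
              rw [hy1, hy2, haa]
            · rw [dif_neg h2] at heq
              exfalso
              obtain ⟨hfy2, hi2j⟩ := Classical.choose_spec (hDmem y2 y2.2 hxy2)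
              rcases Nat.eq_zero_or_pos (Nat.find h1) with ha0 | hapos
              · apply hi2j
                rw [← heq, ha0]
                simp
              · apply h2
                refine ⟨Nat.find h1 - 1, by omega, ?_⟩
                rw [← hfy2, ← heq]
                have he : Nat.find h1 - 1 + 1 = Nat.find h1 := by omega
                rw [he]
        · rw [dif_neg h1] at heq
          obtain ⟨hfy1, hi1j⟩ := Classical.choose_spec (hDmem y1 y1.2 hxy1)
          by_cases hxy2 : (y2 : α) = x
          · rw [dif_pos hxy2] at heq
            exfalso
            rcases Nat.eq_zero_or_pos m with hm' | hm'
            · apply hi1j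
              rw [heq, ← hmspec, hm']
              simp
            · apply h1
              refine ⟨m - 1, by omega, ?_⟩
              rw [← hfy1, heq, ← hmspec]
              have he : m - 1 + 1 = m := by omega
              rw [he]
          · by_cases h2 : ∃ a, a < m ∧ (y2 : α) = f (nxt^[a+1] j)
            · rw [dif_neg hxy2, dif_pos h2] at heq
              exfalso
              obtain ⟨ha2, hy2⟩ := Nat.find_spec h2
              rcases Nat.eq_zero_or_pos (Nat.find h2) with ha0 | hapos
              · apply hi1j
                rw [heq, ha0]
                simp
              · apply h1
                refine ⟨Nat.find h2 - 1, by omega, ?_⟩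
                rw [← hfy1, heq]
                have he : Nat.find h2 - 1 + 1 = Nat.find h2 := by omega
                rw [he]
            · rw [dif_neg hxy2, dif_neg h2] at heq
              obtain ⟨hfy1', -⟩ := Classical.choose_spec (hDmem y1 y1.2 hxy1)
              obtain ⟨hfy2', -⟩ := Classical.choose_spec (hDmem y2 y2.2 hxy2)
              apply Subtype.ext
              rw [← hfy1', ← hfy2', heq]
    · -- membership
      intro y
      dsimp only
      by_cases hxy : (y : α) = x
      · rw [dif_pos hxy, hxy]
        exact hxA
      · rw [dif_neg hxy]
        by_cases h : ∃ a, a < m ∧ (y : α) = f (nxt^[a+1] j)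
        · rw [dif_pos h]
          obtain ⟨ha, hy⟩ := Nat.find_spec h
          have hmem2 : f (nxt^[Nat.find h + 1] j) ∈ A (nxt^[Nat.find h] j) := by
            rw [Function.iterate_succ_apply']
            exact hnxtA _
          exact Set.mem_of_eq_of_mem hy hmem2
        · rw [dif_neg h]
          obtain ⟨hfy, -⟩ := Classical.choose_spec (hDmem y y.2 hxy)
          exact Set.mem_of_eq_of_mem hfy.symm (hfA _)
  -- assembly
  have hFfin : (Set.range f).Finite := Set.toFinite _
  have hCsub : ∀ x ∈ M.E, Set.range f ∪ {x} ⊆ M.E := by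
    intro x hx y hy
    rcases (Set.mem_union _ _ _).mp hy with h | h
    · exact hFE h
    · rw [Set.mem_singleton_iff.mp h]; exact hx
  have hdepC : ∀ x ∈ M.E, x ∉ Set.range f → M.Dep (Set.range f ∪ {x}) := by
    intro x hx hxF
    rw [M.dep_iff]
    refine ⟨?_, hCsub x hx⟩
    intro hI
    have h1 := hcard _ hI
    rw [Set.union_singleton, Set.ncard_insert_of_notMem hxF hFfin, hFcard] at h1
    omega
  have hcircC : ∀ x ∈ M.E, x ∉ Set.range f → IsCircuitOf M (Set.range f ∪ {x}) := by
    intro x hx hxF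
    refine ⟨hdepC x hx hxF, ?_⟩
    intro D hD
    have hDind : M.Indep D := by
      by_cases hxD : x ∈ D
      · obtain ⟨z, hzC, hzD⟩ := Set.exists_of_ssubset hD
        have hzx : z ≠ x := fun h => hzD (h ▸ hxD)
        have hzF : z ∈ Set.range f := by
          rcases (Set.mem_union _ _ _).mp hzC with h | h
          · exact h
          · exact absurd (Set.mem_singleton_iff.mp h) hzx
        obtain ⟨jz, hjz⟩ := hzF
        apply (hDindep x hx hxF jz).subset
        intro y hyD
        rcases (Set.mem_union _ _ _).mp (hD.1 hyD) with h | h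
        · left
          refine ⟨h, ?_⟩
          intro hy1
          apply hzD
          rw [Set.mem_singleton_iff] at hy1
          rw [hjz] at hy1
          exact hy1 ▸ hyD
        · right; exact h
      · apply hIndF.subset
        intro y hyD
        rcases (Set.mem_union _ _ _).mp (hD.1 hyD) with h | h
        · exact h
        · exact absurd (Set.mem_singleton_iff.mp h ▸ hyD) hxD
    exact hDind.not_dep
  have hbaseF : M.IsBase (Set.range f) := by
    obtain ⟨B, hB, hFB⟩ := hIndF.exists_isBase_superset
    have hFB' : Set.range f = B :=
      Set.eq_of_subset_of_ncard_le hFB (by rw [hFcard]; exact hcard B hB.indep) (Set.toFinite B)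
    rw [hFB']
    exact hB
  have hspanC : ∀ x ∈ M.E, M.Spanning (Set.range f ∪ {x}) := by
    intro x hx
    exact hbaseF.spanning.superset Set.subset_union_left (hCsub x hx)
  have hEF : ∃ y ∈ M.E, y ∉ Set.range f := by
    by_contra hcon
    push_neg at hcon
    apply hnl
    refine ⟨pos e0, ?_, r,
      fun i => {z ∈ M.E | pos e0 (f i) ≤ pos e0 z ∧ pos e0 z ≤ pos e0 (f i)},
      fun i => pos e0 (f i), fun i => pos e0 (f i), fun i => rfl, ?_, ?_, rfl, ?_⟩
    · intro x hx y hy hxy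
      rw [← hpos1 e0 he0 x hx, ← hpos1 e0 he0 y hy, hxy]
    · intro i
      exact ⟨f i, hfE i, le_refl _, le_refl _⟩
    · intro i j hij hsub
      have h1 : f i ∈ {z ∈ M.E | pos e0 (f j) ≤ pos e0 z ∧ pos e0 z ≤ pos e0 (f j)} :=
        hsub ⟨hfE i, le_refl _, le_refl _⟩
      have h2 : pos e0 (f i) = pos e0 (f j) := le_antisymm h1.2.2 h1.2.1
      have h3 : f i = f j := by
        rw [← hpos1 e0 he0 (f i) (hfE i), ← hpos1 e0 he0 (f j) (hfE j), h2]
      exact hij (hfinj h3)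
    · intro I
      rw [hInd]
      constructor
      · rintro ⟨hIE, -⟩
        refine ⟨hIE, fun y => Classical.choose (hcon (y : α) (hIE y.2)), ?_, ?_⟩
        · intro y1 y2 hy
          apply Subtype.ext
          rw [← Classical.choose_spec (hcon _ (hIE y1.2)),
            ← Classical.choose_spec (hcon _ (hIE y2.2))]
          exact congrArg f hy
        · intro y
          have hsp := Classical.choose_spec (hcon (y : α) (hIE y.2))
          exact ⟨hIE y.2, le_of_eq (congrArg (pos e0) hsp),
            le_of_eq (congrArg (pos e0) hsp.symm)⟩
      · rintro ⟨hIE, φ, hinj, hmem⟩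
        refine ⟨hIE, φ, hinj, ?_⟩
        intro y
        have h4 := hmem y
        have h5 : (y : α) = f (φ y) := by
          have h6 : pos e0 (y : α) = pos e0 (f (φ y)) := le_antisymm h4.2.2 h4.2.1
          rw [← hpos1 e0 he0 _ h4.1, ← hpos1 e0 he0 _ (hfE (φ y)), h6]
        rw [h5]
        exact hfA _
  obtain ⟨y0, hy0E, hy0F⟩ := hEF
  refine ⟨⟨Set.range f ∪ {y0}, hcircC y0 hy0E hy0F, hspanC y0 hy0E⟩, ?_, ?_⟩
  · intro x hx
    by_cases hxF : x ∈ Set.range f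
    · exact ⟨Set.range f ∪ {y0}, Set.mem_union_left _ hxF, hcircC y0 hy0E hy0F, hspanC y0 hy0E⟩
    · exact ⟨Set.range f ∪ {x}, Set.mem_union_right _ rfl, hcircC x hx hxF, hspanC x hx⟩
  · intro x hx hxF
    exact ⟨hcircC x hx hxF, hspanC x hx⟩
end
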